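/- arXiv:2501.09880 — 4 statements merged into one kernel-verified Lean document; each statement's English description precedes it below -/
import Mathlib

section
/- Let u : 𝕌 → (0, +∞) be a positive harmonic function on the open unit disc. Then for every z ∈ 𝕌, u(z)/u(0) ≤ (1+|z|²)/(1−|z|²) + (|∇u(0)|/u(0)) · |z|/(1−|z|²). -/
open Metric Set Complex
open scoped ENNReal NNReal Topology
open Filter FormalMultilinearSeries

lemma normSq_sub' (z w : ℂ) : normSq (z - w) = normSq z + normSq w - 2 * ((starRingEnd ℂ) w * z).re := by
  simp [Complex.normSq_apply, Complex.sub_re, Complex.sub_im, Complex.mul_re, Complex.mul_im]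
  ring

set_option maxHeartbeats 1000000 in
lemma schwarz_pick_zero (h : ℂ → ℂ) (hd : DifferentiableOn ℂ h (ball 0 1))
    (hmaps : Set.MapsTo h (ball 0 1) (ball 0 1)) (h0 : h 0 = 0)
    (z : ℂ) (hz : z ∈ ball (0:ℂ) 1) :
    ‖h z‖ * (1 + ‖deriv h 0‖ * ‖z‖) ≤ ‖z‖ * (‖deriv h 0‖ + ‖z‖) := by
  have hball : ball (0:ℂ) 1 ∈ nhds (0:ℂ) := ball_mem_nhds _ one_pos
  set ψ : ℂ → ℂ := dslope h 0 with hψ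
  have hψd : DifferentiableOn ℂ ψ (ball 0 1) := (differentiableOn_dslope hball).mpr hd
  have hψle : ∀ w ∈ ball (0:ℂ) 1, ‖ψ w‖ ≤ 1 := by
    intro w hw
    have := Complex.norm_dslope_le_div_of_mapsTo_ball hd (by rw [h0]; exact hmaps.mono_right ball_subset_closedBall) hw
    simpa using this
  have hψ0 : ψ 0 = deriv h 0 := dslope_same h 0
  have hhw : ∀ w : ℂ, h w = w * ψ w := by
    intro w
    have := sub_smul_dslope h 0 w
    rw [h0, sub_zero, sub_zero] at this
    simpa [smul_eq_mul] using this.symm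
  set s := ‖deriv h 0‖ with hs
  set r := ‖z‖ with hr
  have hr1 : r < 1 := mem_ball_zero_iff.mp hz
  have hr0 : 0 ≤ r := norm_nonneg _
  have hs0 : 0 ≤ s := norm_nonneg _
  have hs1 : s ≤ 1 := by rw [hs, ← hψ0]; exact hψle 0 (mem_ball_self one_pos)
  -- main claim : ‖ψ z‖ * (1 + s * r) ≤ s + r
  have key : ‖ψ z‖ * (1 + s * r) ≤ s + r := by
    by_cases H : ∀ w ∈ ball (0:ℂ) 1, ‖ψ w‖ < 1
    · -- Schwarz-Pick via Möbius transform
      set c := deriv h 0 with hc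
      have hs1' : s < 1 := by rw [hs, ← hψ0]; exact H 0 (mem_ball_self one_pos)
      have hden : ∀ w ∈ ball (0:ℂ) 1, (1 : ℂ) - (starRingEnd ℂ) c * ψ w ≠ 0 := by
        intro w hw hzero
        have h1 : (1:ℂ) = (starRingEnd ℂ) c * ψ w := by linear_combination hzero
        have : (1:ℝ) = ‖(starRingEnd ℂ) c * ψ w‖ := by rw [← h1]; simp
        rw [norm_mul, RCLike.norm_conj] at this
        nlinarith [H w hw, hψle w hw, norm_nonneg (ψ w)]
      set Φ : ℂ → ℂ := fun w => (ψ w - c) / (1 - (starRingEnd ℂ) c * ψ w) with hΦ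
      have hΦd : DifferentiableOn ℂ Φ (ball 0 1) := by
        apply DifferentiableOn.div
        · exact hψd.sub_const c
        · exact (differentiableOn_const _).sub ((differentiableOn_const _).mul hψd)
        · exact hden
      have hΦ0 : Φ 0 = 0 := by simp [hΦ, hψ0, hc]
      have hid : ∀ a b : ℂ, normSq (1 - (starRingEnd ℂ) a * b) - normSq (b - a)
          = (1 - normSq a) * (1 - normSq b) := by
        intro a b
        simp [Complex.normSq_apply, Complex.sub_re, Complex.sub_im, Complex.mul_re,
          Complex.mul_im]
        ring
      have hΦmaps : Set.MapsTo Φ (ball 0 1) (ball 0 1) := by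
        intro w hw
        rw [mem_ball_zero_iff]
        have hwlt := H w hw
        have hclt : ‖c‖ < 1 := hs1'
        have hpos : 0 < normSq (1 - (starRingEnd ℂ) c * ψ w) - normSq (ψ w - c) := by
          rw [hid]
          have h1 : normSq c < 1 := by
            rw [← Complex.sq_norm]
            nlinarith [norm_nonneg c, hclt.trans_le le_rfl,
              hclt]
          have h2 : normSq (ψ w) < 1 := by
            rw [← Complex.sq_norm]
            nlinarith [norm_nonneg (ψ w), hwlt]
          nlinarith
        have hnum : ‖ψ w - c‖ < ‖1 - (starRingEnd ℂ) c * ψ w‖ := by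
          have := hpos
          rw [← Complex.sq_norm, ← Complex.sq_norm] at this
          have h1 : ‖ψ w - c‖ ^ 2 < ‖1 - (starRingEnd ℂ) c * ψ w‖ ^ 2 := by
            linarith
          exact lt_of_pow_lt_pow_left₀ 2 (norm_nonneg _) h1
        rw [hΦ]
        rw [norm_div]
        rw [div_lt_one (lt_of_le_of_lt (norm_nonneg _) hnum)]
        exact hnum
      have hSchwarz : ‖Φ z‖ ≤ ‖z‖ := by
        have := Complex.dist_le_dist_of_mapsTo_ball_self hΦd (by rw [hΦ0]; exact hΦmaps.mono_right ball_subset_closedBall) hz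
        simpa [dist_eq_norm, hΦ0] using this
      -- turn into the algebraic inequality
      have hz' : ‖ψ z - c‖ ≤ r * ‖1 - (starRingEnd ℂ) c * ψ z‖ := by
        have hΦz : ‖Φ z‖ = ‖ψ z - c‖ / ‖1 - (starRingEnd ℂ) c * ψ z‖ := by
          rw [hΦ]; exact norm_div _ _
        rw [hΦz] at hSchwarz
        rw [div_le_iff₀ (norm_pos_iff.mpr (hden z hz))] at hSchwarz
        linarith [hSchwarz, mul_comm (‖(1:ℂ) - (starRingEnd ℂ) c * ψ z‖) r]
      -- algebraic finish
      set t := ‖ψ z‖ with htdef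
      have ht0 : 0 ≤ t := norm_nonneg _
      have ht1 : t < 1 := H z hz
      set R := ((starRingEnd ℂ) c * ψ z).re with hRdef
      have hR : R ≤ s * t := by
        calc R ≤ ‖(starRingEnd ℂ) c * ψ z‖ := Complex.re_le_norm _
        _ = s * t := by
            simp [hs, htdef, hc, norm_mul, Complex.norm_conj]
      have hnsc : normSq c = s ^ 2 := by
        rw [hs, Complex.sq_norm]
      have hnst : normSq (ψ z) = t ^ 2 := by
        rw [htdef, Complex.sq_norm]
      have hsq : t ^ 2 + s ^ 2 - 2 * R ≤ r ^ 2 * (1 + s ^ 2 * t ^ 2 - 2 * R) := by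
        have h1 : ‖ψ z - c‖ ^ 2 ≤ (r * ‖1 - (starRingEnd ℂ) c * ψ z‖) ^ 2 := by
          apply pow_le_pow_left₀ (norm_nonneg _) hz' 2
        have e1 : ‖ψ z - c‖ ^ 2 = t ^ 2 + s ^ 2 - 2 * R := by
          rw [Complex.sq_norm, normSq_sub' (ψ z) c, hnsc, hnst]
        have e2 : ‖1 - (starRingEnd ℂ) c * ψ z‖ ^ 2 = 1 + s ^ 2 * t ^ 2 - 2 * R := by
          rw [Complex.sq_norm, normSq_sub' 1 ((starRingEnd ℂ) c * ψ z)]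
          have : ((starRingEnd ℂ) ((starRingEnd ℂ) c * ψ z) * 1).re = R := by
            rw [mul_one, hRdef, Complex.conj_re]
          rw [this, map_one, map_mul, Complex.normSq_conj, hnsc, hnst]
        rw [e1, mul_pow, e2] at h1
        linarith
      have hA : ((1 + s * r) * t - (s + r)) * ((1 - s * r) * t - (s - r)) ≤ 0 := by
        have hexp : ((1 + s * r) * t - (s + r)) * ((1 - s * r) * t - (s - r))
            = (t ^ 2 + s ^ 2 - 2 * R - r ^ 2 * (1 + s ^ 2 * t ^ 2 - 2 * R))
              - 2 * ((s * t - R) * (1 - r ^ 2)) := by ring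
        have hnn : 0 ≤ (s * t - R) * (1 - r ^ 2) :=
          mul_nonneg (sub_nonneg.mpr hR) (by nlinarith : (0:ℝ) ≤ 1 - r ^ 2)
        rw [hexp]
        linarith
      by_contra hcon
      push_neg at hcon
      have hfirst : 0 < (1 + s * r) * t - (s + r) := by linarith
      have hsr : s * r < 1 := by nlinarith [mul_le_mul hs1 hr1.le hr0 zero_le_one]
      have h1sr : 0 < 1 - s * r := by nlinarith
      have hsecond : 0 < (1 - s * r) * t - (s - r) := by
        have hid2 : (1 + s * r) * ((1 - s * r) * t - (s - r))
            = (1 - s * r) * ((1 + s * r) * t - (s + r)) + 2 * (r * (1 - s ^ 2)) := by ring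
        have h1 : 0 < (1 - s * r) * ((1 + s * r) * t - (s + r)) := mul_pos h1sr hfirst
        have h2 : 0 ≤ r * (1 - s ^ 2) := mul_nonneg hr0 (by nlinarith)
        have h3 : 0 < (1 + s * r) * ((1 - s * r) * t - (s - r)) := by rw [hid2]; linarith
        have h4 : 0 < 1 + s * r := by nlinarith [mul_nonneg hs0 hr0]
        by_contra hne
        push_neg at hne
        linarith [h3, mul_nonpos_of_nonneg_of_nonpos h4.le hne]
      linarith [hA, mul_pos hfirst hsecond]
    · -- maximum modulus: ψ is constant of modulus 1
      push_neg at H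
      obtain ⟨w₀, hw₀, hw₀1⟩ := H
      have heq1 : ‖ψ w₀‖ = 1 := le_antisymm (hψle w₀ hw₀) hw₀1
      have hmax : IsMaxOn (norm ∘ ψ) (ball 0 1) w₀ := by
        intro w hw
        simp only [Function.comp_apply, Set.mem_setOf_eq]
        exact (hψle w hw).trans heq1.ge
      have hconst := Complex.eqOn_of_isPreconnected_of_isMaxOn_norm
        (convex_ball (0:ℂ) 1).isPreconnected isOpen_ball hψd hw₀ hmax
      have hψz : ψ z = ψ w₀ := hconst hz
      have hψ0' : ψ 0 = ψ w₀ := hconst (mem_ball_self one_pos)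
      have hseq : s = 1 := by rw [hs, ← hψ0, hψ0', heq1]
      rw [hψz, heq1, hseq]
      ring_nf
      nlinarith
  -- conclude
  have hnh : ‖h z‖ = r * ‖ψ z‖ := by rw [hhw z, norm_mul]
  rw [hnh]
  calc r * ‖ψ z‖ * (1 + s * r) = r * (‖ψ z‖ * (1 + s * r)) := by ring
  _ ≤ r * (s + r) := by
      apply mul_le_mul_of_nonneg_left key hr0

set_option maxHeartbeats 1000000 in
lemma harnack_holo (f : ℂ → ℂ) (hd : DifferentiableOn ℂ f (ball 0 1))
    (hpos : ∀ w ∈ ball (0:ℂ) 1, 0 < (f w).re) (z : ℂ) (hz : z ∈ ball (0:ℂ) 1) :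
    (f z).re * (1 - ‖z‖ ^ 2) ≤ (f 0).re * (1 + ‖z‖ ^ 2) + ‖deriv f 0‖ * ‖z‖ := by
  have h0mem : (0:ℂ) ∈ ball (0:ℂ) 1 := mem_ball_self one_pos
  set x0 := (f 0).re with hx0def
  have hx0 : 0 < x0 := hpos 0 h0mem
  have hdne : ∀ w ∈ ball (0:ℂ) 1, f w + (starRingEnd ℂ) (f 0) ≠ 0 := by
    intro w hw hzero
    have : (f w + (starRingEnd ℂ) (f 0)).re = 0 := by rw [hzero]; rfl
    rw [Complex.add_re, Complex.conj_re] at this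
    linarith [hpos w hw]
  set h : ℂ → ℂ := fun w => (f w - f 0) / (f w + (starRingEnd ℂ) (f 0)) with hhdef
  have hhd : DifferentiableOn ℂ h (ball 0 1) :=
    (hd.sub_const _).div (hd.add_const _) hdne
  have hh0 : h 0 = 0 := by simp [hhdef]
  have hnumlt : ∀ w ∈ ball (0:ℂ) 1,
      ‖f w - f 0‖ < ‖f w + (starRingEnd ℂ) (f 0)‖ := by
    intro w hw
    have hsq : normSq (f w - f 0) < normSq (f w + (starRingEnd ℂ) (f 0)) := by
      simp only [Complex.normSq_apply, Complex.sub_re, Complex.sub_im, Complex.add_re,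
        Complex.add_im, Complex.conj_re, Complex.conj_im]
      nlinarith [hpos w hw, hx0]
    rw [← Complex.sq_norm, ← Complex.sq_norm] at hsq
    exact lt_of_pow_lt_pow_left₀ 2 (norm_nonneg _) hsq
  have hmaps : Set.MapsTo h (ball 0 1) (ball 0 1) := by
    intro w hw
    rw [mem_ball_zero_iff, hhdef]
    rw [norm_div, div_lt_one (lt_of_le_of_lt (norm_nonneg _) (hnumlt w hw))]
    exact hnumlt w hw
  -- deriv h 0
  have hfd : HasDerivAt f (deriv f 0) 0 :=
    (hd.differentiableAt (isOpen_ball.mem_nhds h0mem)).hasDerivAt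
  have hd0 : f 0 + (starRingEnd ℂ) (f 0) = ((2 * x0 : ℝ) : ℂ) := by
    rw [Complex.add_conj]
  have hd0ne : f 0 + (starRingEnd ℂ) (f 0) ≠ 0 := hdne 0 h0mem
  have hhda : HasDerivAt h ((deriv f 0 * (f 0 + (starRingEnd ℂ) (f 0)) -
      (f 0 - f 0) * deriv f 0) / (f 0 + (starRingEnd ℂ) (f 0)) ^ 2) 0 :=
    (hfd.sub_const _).div (hfd.add_const _) hd0ne
  have hx0c : ((2 * x0 : ℝ) : ℂ) ≠ 0 := hd0 ▸ hd0ne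
  have hderivh : deriv h 0 = deriv f 0 / ((2 * x0 : ℝ) : ℂ) := by
    rw [hhda.deriv, hd0, sub_self, zero_mul, sub_zero, sq]
    exact mul_div_mul_right _ _ hx0c
  set s := ‖deriv h 0‖ with hsdef
  have hnds : ‖deriv f 0‖ = 2 * x0 * s := by
    rw [hsdef, hderivh, norm_div, Complex.norm_real, Real.norm_eq_abs,
      abs_of_pos (by linarith : (0:ℝ) < 2 * x0)]
    field_simp
  set r := ‖z‖ with hrdef
  have hr1 : r < 1 := mem_ball_zero_iff.mp hz
  have hr0 : 0 ≤ r := norm_nonneg _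
  have hs0 : 0 ≤ s := norm_nonneg _
  have hkey := schwarz_pick_zero h hhd hmaps hh0 z hz
  rw [← hsdef, ← hrdef] at hkey
  set m := ‖h z‖ with hmdef
  have hm0 : 0 ≤ m := norm_nonneg _
  have hm1 : m < 1 := mem_ball_zero_iff.mp (hmaps hz)
  -- real part identity
  have hE : f z * (1 - h z) = f 0 + (starRingEnd ℂ) (f 0) * h z := by
    have hmul : h z * (f z + (starRingEnd ℂ) (f 0)) = f z - f 0 := by
      show (f z - f 0) / (f z + (starRingEnd ℂ) (f 0)) * (f z + (starRingEnd ℂ) (f 0)) = f z - f 0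
      exact div_mul_cancel₀ _ (hdne z hz)
    linear_combination -hmul
  have hEre := congrArg Complex.re hE
  have hEim := congrArg Complex.im hE
  simp only [Complex.mul_re, Complex.mul_im, Complex.sub_re, Complex.sub_im, Complex.add_re,
    Complex.add_im, Complex.one_re, Complex.one_im, Complex.conj_re, Complex.conj_im] at hEre hEim
  have hre : (f z).re * normSq (1 - h z) = x0 * (1 - normSq (h z)) := by
    simp only [Complex.normSq_apply, Complex.sub_re, Complex.sub_im, Complex.one_re,
      Complex.one_im]
    linear_combination (1 - (h z).re) * hEre - (h z).im * hEim
  have hmsq : normSq (h z) = m ^ 2 := by rw [hmdef, Complex.sq_norm]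
  have hple : (h z).re ≤ m := by
    rw [hmdef]; exact Complex.re_le_norm _
  have hnsge : (1 - m) ^ 2 ≤ normSq (1 - h z) := by
    have : normSq (1 - h z) = 1 - 2 * (h z).re + normSq (h z) := by
      simp only [Complex.normSq_apply, Complex.sub_re, Complex.sub_im, Complex.one_re,
        Complex.one_im]
      ring
    rw [this, hmsq]
    nlinarith
  have ha0 : 0 ≤ (f z).re := (hpos z hz).le
  have h5 : (f z).re * (1 - m) ≤ x0 * (1 + m) := by
    have hq1 : (f z).re * (1 - m) ^ 2 ≤ x0 * (1 - m ^ 2) := by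
      calc (f z).re * (1 - m) ^ 2 ≤ (f z).re * normSq (1 - h z) :=
            mul_le_mul_of_nonneg_left hnsge ha0
      _ = x0 * (1 - normSq (h z)) := hre
      _ = x0 * (1 - m ^ 2) := by rw [hmsq]
    have hm1' : 0 < 1 - m := by linarith
    have := hq1
    nlinarith [mul_pos hx0 hm1']
  have c1 : 1 - r ^ 2 ≤ (1 - m) * (1 + s * r) := by nlinarith [hkey]
  have c2 : (1 + m) * (1 + s * r) ≤ 1 + r ^ 2 + 2 * s * r := by nlinarith [hkey]
  have hsr0 : 0 ≤ 1 + s * r := by nlinarith [mul_nonneg hs0 hr0]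
  calc (f z).re * (1 - r ^ 2) ≤ (f z).re * ((1 - m) * (1 + s * r)) :=
        mul_le_mul_of_nonneg_left c1 ha0
  _ = ((f z).re * (1 - m)) * (1 + s * r) := by ring
  _ ≤ (x0 * (1 + m)) * (1 + s * r) := mul_le_mul_of_nonneg_right h5 hsr0
  _ = x0 * ((1 + m) * (1 + s * r)) := by ring
  _ ≤ x0 * (1 + r ^ 2 + 2 * s * r) := mul_le_mul_of_nonneg_left c2 hx0.le
  _ = x0 * (1 + r ^ 2) + (2 * x0 * s) * r := by ring
  _ = x0 * (1 + r ^ 2) + ‖deriv f 0‖ * r := by rw [hnds]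
open scoped ENNReal NNReal

set_option maxHeartbeats 1000000 in
lemma exists_primitive {g : ℂ → ℂ} {p : FormalMultilinearSeries ℂ ℂ ℂ} {r : NNReal} (hr : 0 < r)
    (hg : HasFPowerSeriesOnBall g p 0 r) (C : ℝ) :
    ∃ F : ℂ → ℂ, F 0 = (C : ℂ) ∧ DifferentiableOn ℂ F (ball 0 (r:ℝ)) ∧
      ∀ w ∈ ball (0:ℂ) (r:ℝ), deriv F w = g w := by
  classical
  set c : ℕ → ℂ := fun n => Nat.casesOn n (C:ℂ) (fun k => p.coeff k / (k+1)) with hc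
  set q := FormalMultilinearSeries.ofScalars ℂ c with hq
  -- radius of q is at least r
  have hqr : (r : ℝ≥0∞) ≤ q.radius := by
    apply ENNReal.le_of_forall_nnreal_lt
    intro s hs
    apply q.le_radius_of_summable
    have hsum : Summable (fun n => ‖p n‖ * (s:ℝ) ^ n) :=
      p.summable_norm_mul_pow (lt_of_lt_of_le hs hg.r_le)
    have hq_norm : ∀ n, ‖q n‖ = ‖c n‖ := fun n => by
      rw [hq]; exact FormalMultilinearSeries.ofScalars_norm ℂ c n
    have key : Summable (fun n => ‖c (n + 1)‖ * (s:ℝ) ^ (n + 1)) := by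
      apply Summable.of_nonneg_of_le (fun n => by positivity)
        (fun n => ?_) (hsum.mul_left (s:ℝ))
      have hcoeff : ‖p.coeff n‖ ≤ ‖p n‖ := by
        have h := (p n).le_opNorm 1
        simpa using h
      have h1 : ‖c (n + 1)‖ ≤ ‖p n‖ := by
        simp only [hc]
        rw [norm_div]
        have : (1:ℝ) ≤ ‖((n:ℂ) + 1)‖ := by
          rw [show ((n:ℂ) + 1) = ((n+1 : ℕ) : ℂ) by push_cast; ring]
          rw [Complex.norm_natCast]
          exact_mod_cast Nat.one_le_iff_ne_zero.mpr (Nat.succ_ne_zero n)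
        calc ‖p.coeff n‖ / ‖((n:ℂ) + 1)‖ ≤ ‖p.coeff n‖ / 1 := by
              apply div_le_div_of_nonneg_left (norm_nonneg _) one_pos this
              |>.trans_eq (by ring_nf)
        _ = ‖p.coeff n‖ := by rw [div_one]
        _ ≤ ‖p n‖ := hcoeff
      calc ‖c (n + 1)‖ * (s:ℝ) ^ (n + 1) = (‖c (n+1)‖ * (s:ℝ) ^ n) * (s:ℝ) := by ring
      _ ≤ (‖p n‖ * (s:ℝ) ^ n) * (s:ℝ) := by
          apply mul_le_mul_of_nonneg_right _ (s.coe_nonneg)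
          exact mul_le_mul_of_nonneg_right h1 (by positivity)
      _ = (s:ℝ) * (‖p n‖ * (s:ℝ) ^ n) := by ring
    have hshift : Summable ((fun n => ‖q n‖ * (s:ℝ) ^ n) ∘ (· + 1)) := by
      simpa only [Function.comp_def, hq_norm] using key
    exact (summable_nat_add_iff 1).mp hshift
  have hqpos : 0 < q.radius := lt_of_lt_of_le (by exact_mod_cast hr) hqr
  have hF : HasFPowerSeriesOnBall q.sum q 0 r :=
    (q.hasFPowerSeriesOnBall hqpos).mono (by exact_mod_cast hr) hqr
  refine ⟨q.sum, ?_, ?_, ?_⟩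
  · -- value at 0
    have h0 := hF.coeff_zero (fun _ => 0)
    rw [FormalMultilinearSeries.ofScalars_apply_eq] at h0
    simpa [hc] using h0.symm
  · have := hF.differentiableOn
    rwa [Metric.emetric_ball_nnreal] at this
  · intro w hw
    have hw' : w ∈ Metric.eball (0:ℂ) r := by
      rwa [Metric.emetric_ball_nnreal]
    by_cases hw0 : w = 0
    · -- at zero, use the power series coefficient
      subst hw0
      have hd0 : deriv q.sum 0 = q 1 (fun _ => 1) := hF.hasFPowerSeriesAt.deriv
      rw [hd0, FormalMultilinearSeries.ofScalars_apply_eq]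
      have hg0 : g 0 = p 0 (fun _ => 1) := by
        have := hg.coeff_zero (fun _ => 1)
        exact this.symm
      rw [hg0, FormalMultilinearSeries.apply_eq_pow_smul_coeff]
      have h1 : c 1 = p.coeff 0 := by simp [hc]
      rw [h1]
      simp
    · -- away from zero, compare term by term
      have hsum1 : HasSum (fun n => q.derivSeries n (fun _ => w)) (fderiv ℂ q.sum w) := by
        have := hF.fderiv.hasSum hw'
        simpa using this
      have hsum2 : HasSum (fun n => (q.derivSeries n (fun _ => w)) 1) (fderiv ℂ q.sum w 1) :=
        hsum1.mapL (ContinuousLinearMap.apply ℂ ℂ (1:ℂ))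
      have hterm : ∀ n, (q.derivSeries n (fun _ => w)) 1 = p.coeff n * w ^ n := by
        intro n
        have hdiag : (q.derivSeries n (fun _ => w)) w = (n + 1) • q (n + 1) (fun _ => w) :=
          q.derivSeries_apply_diag n w
        have happ : q (n + 1) (fun _ => w) = c (n+1) • w ^ (n+1) := by
          rw [hq]; exact FormalMultilinearSeries.ofScalars_apply_eq (c := c) w (n+1)
        have hlin : (q.derivSeries n (fun _ => w)) w = w * (q.derivSeries n (fun _ => w)) 1 := by
          have := (q.derivSeries n (fun _ => w)).map_smul w (1:ℂ)
          simpa [smul_eq_mul] using this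
        have hne : ((n:ℂ) + 1) ≠ 0 := Nat.cast_add_one_ne_zero n
        have : w * (q.derivSeries n (fun _ => w)) 1 = p.coeff n * w ^ (n+1) := by
          rw [← hlin, hdiag, happ]
          simp only [smul_eq_mul, nsmul_eq_mul, hc]
          push_cast
          field_simp
        have hww : (q.derivSeries n (fun _ => w)) 1 = p.coeff n * w ^ (n+1) / w := by
          field_simp [hw0] at this ⊢
          linear_combination this
        rw [hww, pow_succ]
        field_simp
      have hgsum : HasSum (fun n => p.coeff n * w ^ n) (g w) := by
        have := hg.hasSum hw'
        simp only [zero_add] at this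
        have hfun : (fun n => p.coeff n * w ^ n) = fun n => p n (fun _ => w) := by
          funext n
          rw [FormalMultilinearSeries.apply_eq_pow_smul_coeff, smul_eq_mul]
          ring
        rw [hfun]
        exact this
      have heq : fderiv ℂ q.sum w 1 = g w := by
        apply HasSum.unique _ hgsum
        rw [show (fun n => p.coeff n * w ^ n) = fun n => (q.derivSeries n (fun _ => w)) 1 from
          funext fun n => (hterm n).symm]
        exact hsum2
      rw [← heq]
      rfl
open Metric Set Complex

set_option maxHeartbeats 1000000 in
lemma holo_of_harmonic (u : ℂ → ℝ) (hreg : ContDiffOn ℝ 2 u (ball 0 1))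
    (hlap : ∀ z ∈ Metric.ball (0:ℂ) 1,
      fderiv ℝ (fun w => fderiv ℝ u w 1) z 1 +
      fderiv ℝ (fun w => fderiv ℝ u w Complex.I) z Complex.I = 0) :
    DifferentiableOn ℂ
      (fun w => ((fderiv ℝ u w 1 : ℝ) : ℂ) - ((fderiv ℝ u w Complex.I : ℝ) : ℂ) * Complex.I)
      (ball 0 1) := by
  intro z hz
  apply DifferentiableAt.differentiableWithinAt
  have hu2 : ContDiffAt ℝ 2 u z := hreg.contDiffAt (isOpen_ball.mem_nhds hz)
  have hA : ContDiffAt ℝ 1 (fderiv ℝ u) z := hu2.fderiv_right (by norm_num)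
  have hA' : HasFDerivAt (fderiv ℝ u) (fderiv ℝ (fderiv ℝ u) z) z :=
    (hA.differentiableAt one_ne_zero).hasFDerivAt
  set B := fderiv ℝ (fderiv ℝ u) z with hB
  -- symmetry of second derivative
  have hsymm : IsSymmSndFDerivAt ℝ u z := hu2.isSymmSndFDerivAt (by simp)
  have hsym : B Complex.I 1 = B 1 Complex.I := hsymm.eq Complex.I 1
  -- P and Q derivatives
  have hP : HasFDerivAt (fun w => fderiv ℝ u w 1)
      ((ContinuousLinearMap.apply ℝ ℝ (1:ℂ)).comp B) z :=
    (ContinuousLinearMap.apply ℝ ℝ (1:ℂ)).hasFDerivAt.comp z hA'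
  have hQ : HasFDerivAt (fun w => fderiv ℝ u w Complex.I)
      ((ContinuousLinearMap.apply ℝ ℝ Complex.I).comp B) z :=
    (ContinuousLinearMap.apply ℝ ℝ Complex.I).hasFDerivAt.comp z hA'
  -- laplace in terms of B
  have hlapB : B 1 1 + B Complex.I Complex.I = 0 := by
    have h1 : fderiv ℝ (fun w => fderiv ℝ u w 1) z = (ContinuousLinearMap.apply ℝ ℝ (1:ℂ)).comp B :=
      hP.fderiv
    have h2 : fderiv ℝ (fun w => fderiv ℝ u w Complex.I) z
        = (ContinuousLinearMap.apply ℝ ℝ Complex.I).comp B := hQ.fderiv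
    have := hlap z hz
    rw [h1, h2] at this
    simpa using this
  -- real derivative of g
  have hgD : HasFDerivAt
      (fun w => ((fderiv ℝ u w 1 : ℝ) : ℂ) - ((fderiv ℝ u w Complex.I : ℝ) : ℂ) * Complex.I)
      (((ContinuousLinearMap.apply ℝ ℝ (1:ℂ)).comp B).smulRight (1:ℂ)
        - ((ContinuousLinearMap.apply ℝ ℝ Complex.I).comp B).smulRight Complex.I) z := by
    have h1 : HasFDerivAt (fun w => (fderiv ℝ u w 1) • (1:ℂ))
        ((((ContinuousLinearMap.apply ℝ ℝ (1:ℂ)).comp B)).smulRight (1:ℂ)) z :=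
      hP.smul_const (1:ℂ)
    have h2 : HasFDerivAt (fun w => (fderiv ℝ u w Complex.I) • (Complex.I))
        ((((ContinuousLinearMap.apply ℝ ℝ Complex.I).comp B)).smulRight Complex.I) z :=
      hQ.smul_const Complex.I
    have h3 := h1.sub h2
    apply h3.congr_of_eventuallyEq
    filter_upwards with w
    simp [Complex.real_smul]
  -- the candidate complex-linear derivative
  set cval : ℂ := ((B 1 1 : ℝ) : ℂ) - ((B 1 Complex.I : ℝ) : ℂ) * Complex.I with hcval
  set Dc : ℂ →L[ℂ] ℂ := cval • ContinuousLinearMap.id ℂ ℂ with hDc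
  have hres : Dc.restrictScalars ℝ
      = (((ContinuousLinearMap.apply ℝ ℝ (1:ℂ)).comp B).smulRight (1:ℂ)
        - ((ContinuousLinearMap.apply ℝ ℝ Complex.I).comp B).smulRight Complex.I) := by
    apply ContinuousLinearMap.ext
    intro v
    have hdecomp : ∀ (L : ℂ →L[ℝ] ℂ), L v = v.re • L 1 + v.im • L Complex.I := by
      intro L
      have hv : v = v.re • (1:ℂ) + v.im • Complex.I := by
        simp [Complex.real_smul]
      conv_lhs => rw [hv]
      rw [map_add, map_smul, map_smul]
    rw [hdecomp (Dc.restrictScalars ℝ), hdecomp _]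
    have e1 : (Dc.restrictScalars ℝ) 1 = cval := by simp [hDc]
    have e2 : (Dc.restrictScalars ℝ) Complex.I = cval * Complex.I := by
      simp [hDc]
    have e3 : (((ContinuousLinearMap.apply ℝ ℝ (1:ℂ)).comp B).smulRight (1:ℂ)
        - ((ContinuousLinearMap.apply ℝ ℝ Complex.I).comp B).smulRight Complex.I) 1
        = ((B 1 1 : ℝ) : ℂ) - ((B 1 Complex.I : ℝ) : ℂ) * Complex.I := by
      simp [Complex.real_smul]
    have e4 : (((ContinuousLinearMap.apply ℝ ℝ (1:ℂ)).comp B).smulRight (1:ℂ)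
        - ((ContinuousLinearMap.apply ℝ ℝ Complex.I).comp B).smulRight Complex.I) Complex.I
        = ((B Complex.I 1 : ℝ) : ℂ) - ((B Complex.I Complex.I : ℝ) : ℂ) * Complex.I := by
      simp [Complex.real_smul]
    rw [e1, e2, e3, e4]
    -- use symmetry and Laplace
    have hBII : (B Complex.I Complex.I : ℝ) = - B 1 1 := by linarith [hlapB]
    rw [hsym, hBII, hcval]
    push_cast
    apply Complex.ext <;> simp <;> ring
  have hgC : HasFDerivAt
      (fun w => ((fderiv ℝ u w 1 : ℝ) : ℂ) - ((fderiv ℝ u w Complex.I : ℝ) : ℂ) * Complex.I)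
      Dc z := hasFDerivAt_of_restrictScalars ℝ hgD hres
  exact hgC.differentiableAt
open Metric Set Complex

noncomputable def Gfun (u : ℂ → ℝ) : ℂ → ℂ :=
  fun w => ((fderiv ℝ u w 1 : ℝ) : ℂ) - ((fderiv ℝ u w Complex.I : ℝ) : ℂ) * Complex.I

set_option maxHeartbeats 1000000 in
lemma re_eq_of_deriv (u : ℂ → ℝ) (hreg : ContDiffOn ℝ 2 u (ball 0 1))
    {r : ℝ} (hr0 : 0 < r) (hr1 : r ≤ 1) {F : ℂ → ℂ}
    (hFd : DifferentiableOn ℂ F (ball 0 r))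
    (hder : ∀ w ∈ ball (0:ℂ) r, deriv F w = Gfun u w)
    (hF0 : F 0 = ((u 0 : ℝ) : ℂ)) :
    ∀ w ∈ ball (0:ℂ) r, (F w).re = u w := by
  have hsub : ball (0:ℂ) r ⊆ ball 0 1 := ball_subset_ball hr1
  set φ : ℂ → ℝ := fun w => u w - (F w).re with hφ
  have hφd : DifferentiableOn ℝ φ (ball 0 r) := by
    apply DifferentiableOn.sub
    · exact ((hreg.differentiableOn (by norm_num)).mono hsub)
    · exact Complex.reCLM.differentiable.comp_differentiableOn (hFd.restrictScalars ℝ)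
  have hφ' : ∀ x ∈ ball (0:ℂ) r, fderivWithin ℝ φ (ball 0 r) x = 0 := by
    intro x hx
    have hx1 : x ∈ ball (0:ℂ) 1 := hsub hx
    have hu2 : ContDiffAt ℝ 2 u x := hreg.contDiffAt (isOpen_ball.mem_nhds hx1)
    have hud : DifferentiableAt ℝ u x := hu2.differentiableAt (by norm_num)
    have hFat : HasDerivAt F (Gfun u x) x := by
      have h1 : DifferentiableAt ℂ F x := hFd.differentiableAt (isOpen_ball.mem_nhds hx)
      have := h1.hasDerivAt
      rwa [hder x hx] at this
    have hFre : HasFDerivAt (fun w => (F w).re)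
        (Complex.reCLM.comp
          (((1 : ℂ →L[ℂ] ℂ).smulRight (Gfun u x)).restrictScalars ℝ)) x :=
      Complex.reCLM.hasFDerivAt.comp x (hFat.hasFDerivAt.restrictScalars ℝ)
    have heq : fderiv ℝ u x
        = Complex.reCLM.comp (((1 : ℂ →L[ℂ] ℂ).smulRight (Gfun u x)).restrictScalars ℝ) := by
      apply ContinuousLinearMap.ext
      intro v
      have hdecomp : ∀ (L : ℂ →L[ℝ] ℝ), L v = v.re • L 1 + v.im • L Complex.I := by
        intro L
        have hv : v = v.re • (1:ℂ) + v.im • Complex.I := by simp [Complex.real_smul]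
        conv_lhs => rw [hv]
        rw [map_add, map_smul, map_smul]
      rw [hdecomp (fderiv ℝ u x), hdecomp (Complex.reCLM.comp
        (((1 : ℂ →L[ℂ] ℂ).smulRight (Gfun u x)).restrictScalars ℝ))]
      have key : ∀ v : ℂ, (Complex.reCLM.comp
          (((1 : ℂ →L[ℂ] ℂ).smulRight (Gfun u x)).restrictScalars ℝ)) v
          = (v * Gfun u x).re := by intro v; simp
      have e1 : (Complex.reCLM.comp
          (((1 : ℂ →L[ℂ] ℂ).smulRight (Gfun u x)).restrictScalars ℝ)) 1 = fderiv ℝ u x 1 := by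
        rw [key]; simp [Gfun]
      have e2 : (Complex.reCLM.comp
          (((1 : ℂ →L[ℂ] ℂ).smulRight (Gfun u x)).restrictScalars ℝ)) Complex.I
          = fderiv ℝ u x Complex.I := by
        rw [key]; simp [Gfun, Complex.mul_re]
      rw [e1, e2]
    have hφat : HasFDerivAt φ (0 : ℂ →L[ℝ] ℝ) x := by
      have h0 := hud.hasFDerivAt.sub hFre
      rw [← heq, sub_self] at h0
      exact h0
    rw [fderivWithin_of_isOpen isOpen_ball hx, hφat.fderiv]
  intro w hw
  have h0mem : (0:ℂ) ∈ ball (0:ℂ) r := mem_ball_self hr0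
  have := (convex_ball (0:ℂ) r).is_const_of_fderivWithin_eq_zero hφd hφ' hw h0mem
  have hφ0 : φ 0 = 0 := by simp [hφ, hF0]
  rw [hφ0] at this
  have : u w - (F w).re = 0 := this
  linarith

lemma gradient_norm_eq (u : ℂ → ℝ) (hdiff : DifferentiableAt ℝ u 0) :
    ‖gradient u 0‖ = ‖Gfun u 0‖ := by
  set Gd : ℂ := Complex.mk (fderiv ℝ u 0 1) (fderiv ℝ u 0 Complex.I) with hGd
  have hgrad : HasGradientAt u Gd 0 := by
    show HasFDerivAt u ((InnerProductSpace.toDual ℝ ℂ) Gd) 0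
    have heq : (InnerProductSpace.toDual ℝ ℂ) Gd = fderiv ℝ u 0 := by
      apply ContinuousLinearMap.ext
      intro v
      have hdecomp : ∀ (L : ℂ →L[ℝ] ℝ), L v = v.re • L 1 + v.im • L Complex.I := by
        intro L
        have hv : v = v.re • (1:ℂ) + v.im • Complex.I := by simp [Complex.real_smul]
        conv_lhs => rw [hv]
        rw [map_add, map_smul, map_smul]
      rw [hdecomp ((InnerProductSpace.toDual ℝ ℂ) Gd), hdecomp (fderiv ℝ u 0)]
      have e1 : ((InnerProductSpace.toDual ℝ ℂ) Gd) 1 = fderiv ℝ u 0 1 := by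
        simp [InnerProductSpace.toDual_apply_apply, Complex.inner, hGd]
      have e2 : ((InnerProductSpace.toDual ℝ ℂ) Gd) Complex.I = fderiv ℝ u 0 Complex.I := by
        simp [InnerProductSpace.toDual_apply_apply, Complex.inner, hGd, Complex.mul_re]
      rw [e1, e2]
    rw [heq]
    exact hdiff.hasFDerivAt
  have h1 : gradient u 0 = Gd := hgrad.gradient
  rw [h1]
  have h2 : Gfun u 0 = (starRingEnd ℂ) Gd := by
    apply Complex.ext <;> simp [Gfun, hGd]
  rw [h2, Complex.norm_conj]

set_option maxHeartbeats 1000000 in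
/-- Strengthened Harnack inequality (upper bound) for positive harmonic
functions on the unit disc. -/
theorem strong_harnack_upper (u : ℂ → ℝ)
(hreg : ContDiffOn ℝ 2 u (Metric.ball (0:ℂ) 1))
    (hlap : ∀ z ∈ Metric.ball (0:ℂ) 1,
      fderiv ℝ (fun w => fderiv ℝ u w 1) z 1 +
      fderiv ℝ (fun w => fderiv ℝ u w Complex.I) z Complex.I = 0)
    (hpos : ∀ z ∈ Metric.ball (0:ℂ) 1, 0 < u z)
    (z : ℂ) (hz : z ∈ Metric.ball (0:ℂ) 1) :
    u z / u 0 ≤ (1 + ‖z‖ ^ 2) / (1 - ‖z‖ ^ 2) +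
      (‖gradient u 0‖ / u 0) * (‖z‖ / (1 - ‖z‖ ^ 2)) := by
  have h0mem : (0:ℂ) ∈ ball (0:ℂ) 1 := mem_ball_self one_pos
  have hu0 : 0 < u 0 := hpos 0 h0mem
  have hG : DifferentiableOn ℂ (Gfun u) (ball 0 1) := holo_of_harmonic u hreg hlap
  have hud0 : DifferentiableAt ℝ u 0 :=
    (hreg.contDiffAt (isOpen_ball.mem_nhds h0mem)).differentiableAt (by norm_num)
  have hgradeq : ‖gradient u 0‖ = ‖Gfun u 0‖ := gradient_norm_eq u hud0
  set a := ‖z‖ with ha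
  have ha1 : a < 1 := by rw [ha]; exact mem_ball_zero_iff.mp hz
  have ha0 : 0 ≤ a := norm_nonneg z
  have claim : ∀ r : ℝ, a < r → r < 1 →
      u z * (1 - (a/r)^2) ≤ u 0 * (1 + (a/r)^2) + (‖Gfun u 0‖ * r) * (a/r) := by
    intro r har hr1
    have hr0 : 0 < r := lt_of_le_of_lt ha0 har
    have hrne : ((r:ℝ):ℂ) ≠ 0 := by exact_mod_cast hr0.ne'
    set r' : NNReal := ⟨r, hr0.le⟩ with hr'
    have hsubcb : closedBall (0:ℂ) r ⊆ ball 0 1 := by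
      intro w hw
      rw [mem_closedBall, dist_zero_right] at hw
      rw [mem_ball, dist_zero_right]
      linarith
    have hps : HasFPowerSeriesOnBall (Gfun u) (cauchyPowerSeries (Gfun u) 0 r') 0 r' :=
      (hG.mono hsubcb).hasFPowerSeriesOnBall hr0
    obtain ⟨F, hF0, hFd, hFder⟩ := exists_primitive hr0 hps (u 0)
    have hFd' : DifferentiableOn ℂ F (ball 0 r) := hFd
    have hFder' : ∀ w ∈ ball (0:ℂ) r, deriv F w = Gfun u w := hFder
    have hre : ∀ w ∈ ball (0:ℂ) r, (F w).re = u w :=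
      re_eq_of_deriv u hreg hr0 hr1.le hFd' hFder' hF0
    have hsubball : ball (0:ℂ) r ⊆ ball 0 1 := ball_subset_ball hr1.le
    have hmapsr : ∀ w ∈ ball (0:ℂ) 1, ((r:ℝ):ℂ) * w ∈ ball (0:ℂ) r := by
      intro w hw
      rw [mem_ball_zero_iff] at hw ⊢
      rw [norm_mul, Complex.norm_real, Real.norm_eq_abs, abs_of_pos hr0]
      nlinarith [norm_nonneg w]
    set ft : ℂ → ℂ := fun w => F (((r:ℝ):ℂ) * w) with hftdef
    have hftd : DifferentiableOn ℂ ft (ball 0 1) := by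
      apply DifferentiableOn.comp hFd'
        (((differentiable_const (((r:ℝ):ℂ))).mul differentiable_id).differentiableOn)
      intro w hw
      exact hmapsr w hw
    have hftpos : ∀ w ∈ ball (0:ℂ) 1, 0 < (ft w).re := by
      intro w hw
      rw [hftdef]
      simp only
      rw [hre _ (hmapsr w hw)]
      exact hpos _ (hsubball (hmapsr w hw))
    have hFat0 : HasDerivAt F (Gfun u 0) (((r:ℝ):ℂ) * 0) := by
      rw [mul_zero]
      have h1 : DifferentiableAt ℂ F 0 :=
        hFd'.differentiableAt (isOpen_ball.mem_nhds (mem_ball_self hr0))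
      have h2 := h1.hasDerivAt
      rwa [hFder' 0 (mem_ball_self hr0)] at h2
    have hinner : HasDerivAt (fun w : ℂ => ((r:ℝ):ℂ) * w) (((r:ℝ):ℂ)) 0 := by
      simpa using (hasDerivAt_id (0:ℂ)).const_mul (((r:ℝ):ℂ))
    have hcomp : HasDerivAt ft (Gfun u 0 * ((r:ℝ):ℂ)) 0 := HasDerivAt.comp 0 hFat0 hinner
    have hderft : deriv ft 0 = Gfun u 0 * ((r:ℝ):ℂ) := hcomp.deriv
    have hzmem : z / ((r:ℝ):ℂ) ∈ ball (0:ℂ) 1 := by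
      rw [mem_ball_zero_iff, norm_div, Complex.norm_real, Real.norm_eq_abs, abs_of_pos hr0]
      rw [div_lt_one hr0]
      exact har
    have H := harnack_holo ft hftd hftpos (z / ((r:ℝ):ℂ)) hzmem
    -- rewrite the pieces
    have e0 : ft (z / ((r:ℝ):ℂ)) = F z := by
      rw [hftdef]
      simp only
      rw [mul_comm, div_mul_cancel₀ z hrne]
    have e1 : (ft (z / ((r:ℝ):ℂ))).re = u z := by
      rw [e0]
      exact hre z (by rw [mem_ball_zero_iff]; exact har)
    have e2 : (ft 0).re = u 0 := by
      rw [hftdef]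
      simp only [mul_zero, hF0, Complex.ofReal_re]
    have e3 : ‖deriv ft 0‖ = ‖Gfun u 0‖ * r := by
      rw [hderft, norm_mul, Complex.norm_real, Real.norm_eq_abs, abs_of_pos hr0]
    have e4 : ‖z / ((r:ℝ):ℂ)‖ = a / r := by
      rw [norm_div, Complex.norm_real, Real.norm_eq_abs, abs_of_pos hr0]
    rw [e1, e2, e3, e4] at H
    exact H
  -- limit as r → 1⁻
  have hlim : u z * (1 - a^2) ≤ u 0 * (1 + a^2) + ‖Gfun u 0‖ * a := by
    have hdiv : ContinuousAt (fun r : ℝ => a / r) 1 :=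
      continuousAt_const.div continuousAt_id one_ne_zero
    have h1 : ContinuousAt (fun r : ℝ => u z * (1 - (a/r)^2)) 1 :=
      continuousAt_const.mul (continuousAt_const.sub (hdiv.pow 2))
    have h2 : ContinuousAt (fun r : ℝ =>
        u 0 * (1 + (a/r)^2) + (‖Gfun u 0‖ * r) * (a/r)) 1 :=
      (continuousAt_const.mul (continuousAt_const.add (hdiv.pow 2))).add
        ((continuousAt_const.mul continuousAt_id).mul hdiv)
    have hLt : Tendsto (fun r : ℝ => u z * (1 - (a/r)^2)) (nhdsWithin 1 (Iio 1))
        (nhds (u z * (1 - a^2))) := by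
      have := h1.tendsto.mono_left (nhdsWithin_le_nhds (s := Iio (1:ℝ)))
      simpa using this
    have hRt : Tendsto (fun r : ℝ =>
        u 0 * (1 + (a/r)^2) + (‖Gfun u 0‖ * r) * (a/r)) (nhdsWithin 1 (Iio 1))
        (nhds (u 0 * (1 + a^2) + ‖Gfun u 0‖ * a)) := by
      have := h2.tendsto.mono_left (nhdsWithin_le_nhds (s := Iio (1:ℝ)))
      simpa using this
    have hev : ∀ᶠ r in nhdsWithin (1:ℝ) (Iio 1),
        u z * (1 - (a/r)^2) ≤
          u 0 * (1 + (a/r)^2) + (‖Gfun u 0‖ * r) * (a/r) := by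
      filter_upwards [Ioo_mem_nhdsLT_of_mem (⟨ha1, le_rfl⟩ : (1:ℝ) ∈ Ioc a 1)] with r hr
      exact claim r hr.1 hr.2
    exact le_of_tendsto_of_tendsto hLt hRt hev
  -- final algebra
  have hb : 0 < 1 - a^2 := by nlinarith
  rw [div_le_iff₀ hu0]
  have hrhs : ((1 + a^2)/(1 - a^2) + (‖gradient u 0‖ / u 0) * (a/(1 - a^2))) * u 0
      = (u 0 * (1 + a^2) + ‖gradient u 0‖ * a)/(1 - a^2) := by
    field_simp
  rw [hrhs, le_div_iff₀ hb, hgradeq]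
  nlinarith [hlim]
end

section
/- Let u : 𝕌 → (0, +∞) be a positive harmonic function on the open unit disc. Then for every z ∈ 𝕌, (1+|z|²)/(1−|z|²) + (|∇u(0)|/u(0)) · |z|/(1−|z|²) ≤ (1+|z|)/(1−|z|). -/
open Complex Metric intervalIntegral

noncomputable def gfun (u : ℂ → ℝ) (z : ℂ) : ℂ :=
  (fderiv ℝ u z 1 : ℝ) - Complex.I * (fderiv ℝ u z Complex.I : ℝ)

noncomputable def Amap : (ℂ →L[ℝ] ℝ) →L[ℝ] ℂ :=
  Complex.ofRealCLM.comp (ContinuousLinearMap.apply ℝ ℝ (1:ℂ)) -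
    Complex.I • (Complex.ofRealCLM.comp (ContinuousLinearMap.apply ℝ ℝ Complex.I))

lemma Amap_apply (L : ℂ →L[ℝ] ℝ) : Amap L = (L 1 : ℝ) - Complex.I * (L Complex.I : ℝ) := by
  simp [Amap, smul_eq_mul]

lemma gfun_hasDerivAt (u : ℂ → ℝ) (hreg : ContDiffOn ℝ 2 u (Metric.ball (0:ℂ) 1))
    (hlap : ∀ z ∈ Metric.ball (0:ℂ) 1,
      fderiv ℝ (fun w => fderiv ℝ u w 1) z 1 +
      fderiv ℝ (fun w => fderiv ℝ u w Complex.I) z Complex.I = 0)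
    {z : ℂ} (hz : z ∈ Metric.ball (0:ℂ) 1) :
    HasDerivAt (gfun u) (Amap (fderiv ℝ (fderiv ℝ u) z 1)) z := by
  have hop : IsOpen (Metric.ball (0:ℂ) 1) := isOpen_ball
  have hnh : Metric.ball (0:ℂ) 1 ∈ nhds z := hop.mem_nhds hz
  have hdu : ContDiffOn ℝ 1 (fderiv ℝ u) (Metric.ball 0 1) :=
    hreg.fderiv_of_isOpen hop (by norm_num)
  have hHd : DifferentiableAt ℝ (fderiv ℝ u) z :=
    (hdu.contDiffAt hnh).differentiableAt one_ne_zero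
  set H := fderiv ℝ (fderiv ℝ u) z with hHdef
  have hH : HasFDerivAt (fderiv ℝ u) H z := hHd.hasFDerivAt
  have hev : ∀ᶠ y in nhds z, HasFDerivAt u (fderiv ℝ u y) y := by
    filter_upwards [hnh] with y hy
    exact ((hreg.contDiffAt (hop.mem_nhds hy)).differentiableAt (by norm_num)).hasFDerivAt
  have hsymm : H 1 Complex.I = H Complex.I 1 :=
    second_derivative_symmetric_of_eventually_of_real hev hH 1 Complex.I
  -- Laplace equation in terms of H
  have hc1 : HasFDerivAt (fun w => fderiv ℝ u w 1)
      ((ContinuousLinearMap.apply ℝ ℝ (1:ℂ)).comp H) z :=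
    (ContinuousLinearMap.apply ℝ ℝ (1:ℂ)).hasFDerivAt.comp z hH
  have hcI : HasFDerivAt (fun w => fderiv ℝ u w Complex.I)
      ((ContinuousLinearMap.apply ℝ ℝ Complex.I).comp H) z :=
    (ContinuousLinearMap.apply ℝ ℝ Complex.I).hasFDerivAt.comp z hH
  have hlap' : H 1 1 + H Complex.I Complex.I = 0 := by
    have := hlap z hz
    rwa [hc1.fderiv, hcI.fderiv] at this
  -- the real derivative of gfun
  have hg : HasFDerivAt (gfun u) (Amap.comp H) z := by
    have : HasFDerivAt (fun w => Amap (fderiv ℝ u w)) (Amap.comp H) z :=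
      Amap.hasFDerivAt.comp z hH
    exact this.congr_of_eventuallyEq
      (Filter.Eventually.of_forall fun y => by simp only [gfun, Amap_apply])
  -- complex linearity
  have key : Amap (H Complex.I) = Complex.I * Amap (H 1) := by
    rw [Amap_apply, Amap_apply]
    have h1 : (H Complex.I) 1 = H 1 Complex.I := hsymm.symm
    have h2 : (H Complex.I) Complex.I = -(H 1 1) := by linarith
    rw [h1, h2]
    push_cast
    linear_combination ((H 1 Complex.I : ℝ) : ℂ) * Complex.I_sq
  rw [hasDerivAt_iff_hasFDerivAt]
  apply hasFDerivAt_of_restrictScalars ℝ hg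
  ext w
  have hw : w = w.re • (1:ℂ) + w.im • Complex.I := by
    simp [Complex.real_smul, Complex.re_add_im]
  simp only [ContinuousLinearMap.coe_restrictScalars', ContinuousLinearMap.smulRight_apply,
    ContinuousLinearMap.one_apply, ContinuousLinearMap.coe_comp', Function.comp_apply,
    ContinuousLinearMap.toSpanSingleton_apply]
  rw [hw]
  simp only [map_add, map_smul]
  simp only [key, smul_eq_mul, Complex.real_smul]
  ring

/-- derivative of a holomorphic function along a real-parameter curve -/
lemma hasDerivAt_comp_curve {g : ℂ → ℂ} {w : ℂ} {c : ℂ} (hg : HasDerivAt g c w)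
    {γ : ℝ → ℂ} {γ' : ℂ} {t : ℝ} (hγ : HasDerivAt γ γ' t) (hw : γ t = w) :
    HasDerivAt (fun s => g (γ s)) (γ' * c) t := by
  have hF : HasFDerivAt g ((ContinuousLinearMap.smulRight (1 : ℂ →L[ℂ] ℂ) c).restrictScalars ℝ)
      (γ t) := by
    rw [hw]; exact (hasDerivAt_iff_hasFDerivAt.1 hg).restrictScalars ℝ
  have := hF.comp_hasDerivAt t hγ
  simpa [smul_eq_mul, Function.comp_def] using this

lemma primitive_hasDerivAt {g : ℂ → ℂ} (hg : DifferentiableOn ℂ g (ball (0:ℂ) 1))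
    {z : ℂ} (hz : z ∈ ball (0:ℂ) 1) :
    HasDerivAt (fun w => ∫ t in (0:ℝ)..1, w * g ((t:ℂ) * w)) (g z) z := by
  have hop : IsOpen (ball (0:ℂ) 1) := isOpen_ball
  have hana : AnalyticOnNhd ℂ g (ball (0:ℂ) 1) := hg.analyticOnNhd hop
  have hg' : ContinuousOn (deriv g) (ball (0:ℂ) 1) :=
    (hana.deriv).continuousOn
  have hgc : ContinuousOn g (ball (0:ℂ) 1) := hg.continuousOn
  have hz1 : ‖z‖ < 1 := by simpa [Complex.dist_eq] using hz
  set ρ : ℝ := (1 + ‖z‖) / 2 with hρdef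
  have hρ1 : ρ < 1 := by simp only [hρdef]; linarith
  have hρ0 : 0 ≤ ρ := by positivity
  have hzρ : ‖z‖ < ρ := by simp only [hρdef]; linarith
  set ε : ℝ := (1 - ‖z‖) / 2 with hεdef
  have hε : 0 < ε := by simp only [hεdef]; linarith
  -- membership facts
  have hmem : ∀ x ∈ ball z ε, ∀ t : ℝ, t ∈ Set.uIcc (0:ℝ) 1 → (t:ℂ) * x ∈ closedBall (0:ℂ) ρ := by
    intro x hx t ht
    rw [Set.uIcc_of_le (by norm_num)] at ht
    have hxρ : ‖x‖ ≤ ρ := by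
      have := mem_ball_iff_norm.1 hx
      have h2 : ‖x‖ ≤ ‖z‖ + ε := by
        calc ‖x‖ ≤ ‖x - z‖ + ‖z‖ := by
              simpa using norm_add_le (x - z) z
          _ ≤ ‖z‖ + ε := by
              linarith [this.le]
      simp only [hρdef, hεdef] at h2 ⊢; linarith
    simp only [mem_closedBall, Complex.dist_eq, sub_zero, map_mul, norm_mul, Complex.norm_real, Real.norm_eq_abs]
    calc |t| * ‖x‖ ≤ 1 * ρ := by
          apply mul_le_mul (abs_le.2 ⟨by linarith [ht.1], ht.2⟩) hxρ (norm_nonneg x) one_pos.le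
      _ = ρ := one_mul ρ
  have hsub : closedBall (0:ℂ) ρ ⊆ ball (0:ℂ) 1 := closedBall_subset_ball hρ1
  -- bounds
  obtain ⟨C, hC⟩ := (isCompact_closedBall (0:ℂ) ρ).exists_bound_of_continuousOn
    (hgc.mono hsub)
  obtain ⟨C', hC'⟩ := (isCompact_closedBall (0:ℂ) ρ).exists_bound_of_continuousOn
    (hg'.mono hsub)
  have hline : ∀ x ∈ ball z ε, Set.MapsTo (fun t : ℝ => (t:ℂ) * x) (Set.uIcc (0:ℝ) 1) (ball (0:ℂ) 1) :=
    fun x hx t ht => hsub (hmem x hx t ht)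
  have hcont1 : ∀ x ∈ ball z ε, ContinuousOn (fun t : ℝ => g ((t:ℂ)*x)) (Set.uIcc (0:ℝ) 1) :=
    fun x hx => hgc.comp ((Complex.continuous_ofReal.mul continuous_const).continuousOn) (hline x hx)
  have hcont2 : ∀ x ∈ ball z ε, ContinuousOn (fun t : ℝ => deriv g ((t:ℂ)*x)) (Set.uIcc (0:ℝ) 1) :=
    fun x hx => hg'.comp ((Complex.continuous_ofReal.mul continuous_const).continuousOn) (hline x hx)
  -- F' definition bound etc.
  set F' : ℂ → ℝ → ℂ := fun x t => g ((t:ℂ) * x) + x * (deriv g ((t:ℂ) * x) * (t:ℂ)) with hF'def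
  have hzmem : z ∈ ball z ε := mem_ball_self hε
  have key := intervalIntegral.hasDerivAt_integral_of_dominated_loc_of_deriv_le
    (F := fun (x : ℂ) (t : ℝ) => x * g ((t:ℂ) * x)) (F' := F') (x₀ := z)
    (a := (0:ℝ)) (b := 1) (μ := MeasureTheory.volume) (bound := fun _ => C + (‖z‖ + ε) * (C' * 1)) (ball_mem_nhds z hε)
    ?_ ?_ ?_ ?_ ?_ ?_
  · obtain ⟨hint, hder⟩ := key
    have hFTC : ∫ t in (0:ℝ)..1, F' z t = g z := by
      have : ∀ t ∈ Set.uIcc (0:ℝ) 1, HasDerivAt (fun s : ℝ => (s:ℂ) * g ((s:ℂ) * z)) (F' z t) t := by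
        intro t ht
        have htz : (t:ℂ) * z ∈ ball (0:ℂ) 1 := hsub (hmem z hzmem t ht)
        have hgd : HasDerivAt g (deriv g ((t:ℂ)*z)) ((t:ℂ)*z) :=
          (hg.differentiableAt (hop.mem_nhds htz)).hasDerivAt
        have hcurve : HasDerivAt (fun s : ℝ => (s:ℂ) * z) z t := by
          simpa using (Complex.ofRealCLM.hasDerivAt (x := t)).mul_const z
        have hψ : HasDerivAt (fun s : ℝ => g ((s:ℂ) * z)) (z * deriv g ((t:ℂ)*z)) t :=
          hasDerivAt_comp_curve hgd hcurve rfl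
        have hofReal : HasDerivAt (fun s : ℝ => (s:ℂ)) 1 t := by
          simpa using (hasDerivAt_id t).ofReal_comp
        have := hofReal.mul hψ
        exact this.congr_deriv (by simp only [hF'def]; ring)
      rw [integral_eq_sub_of_hasDerivAt this hint]
      simp
    rw [← hFTC]
    exact hder
  · -- measurability of F x
    filter_upwards [ball_mem_nhds z hε] with x hx
    exact ((continuousOn_const.mul (hcont1 x hx)).mono Set.uIoc_subset_uIcc).aestronglyMeasurable
      measurableSet_uIoc
  · -- integrability of F z
    exact (continuousOn_const.mul (hcont1 z hzmem)).intervalIntegrable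
  · -- measurability of F' z
    exact (((hcont1 z hzmem).add (continuousOn_const.mul ((hcont2 z hzmem).mul
      Complex.continuous_ofReal.continuousOn))).mono Set.uIoc_subset_uIcc).aestronglyMeasurable
      measurableSet_uIoc
  · -- bound
    apply MeasureTheory.ae_of_all
    intro t ht x hx
    have htu : t ∈ Set.uIcc (0:ℝ) 1 := Set.uIoc_subset_uIcc ht
    have hmemx := hmem x hx t htu
    have ht1 : |t| ≤ 1 := by
      rw [Set.uIcc_of_le (by norm_num)] at htu
      rw [Set.mem_uIoc] at ht
      rcases ht with h | h
      · rw [abs_of_pos h.1]; exact h.2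
      · linarith [h.1, h.2]
    have hxb : ‖x‖ ≤ ‖z‖ + ε := by
      have := mem_ball_iff_norm.1 hx
      calc ‖x‖ ≤ ‖x - z‖ + ‖z‖ := by
            simpa using norm_add_le (x - z) z
        _ ≤ ‖z‖ + ε := by linarith [this.le]
    simp only [hF'def]
    calc ‖g ((t:ℂ)*x) + x * (deriv g ((t:ℂ)*x) * (t:ℂ))‖
        ≤ ‖g ((t:ℂ)*x)‖ + ‖x * (deriv g ((t:ℂ)*x) * (t:ℂ))‖ :=
          norm_add_le _ _
      _ ≤ C + (‖z‖ + ε) * (C' * 1) := by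
          apply add_le_add (hC _ hmemx)
          rw [norm_mul, norm_mul, Complex.norm_real, Real.norm_eq_abs]
          apply mul_le_mul hxb ?_ (by positivity) (by positivity)
          exact mul_le_mul (hC' _ hmemx) ht1 (abs_nonneg t) ((norm_nonneg _).trans (hC' _ hmemx))
  · exact intervalIntegrable_const
  · -- differentiability in x
    apply MeasureTheory.ae_of_all
    intro t ht x hx
    have htu : t ∈ Set.uIcc (0:ℝ) 1 := Set.uIoc_subset_uIcc ht
    have htx : (t:ℂ) * x ∈ ball (0:ℂ) 1 := hsub (hmem x hx t htu)
    have hgd : HasDerivAt g (deriv g ((t:ℂ)*x)) ((t:ℂ)*x) :=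
      (hg.differentiableAt (hop.mem_nhds htx)).hasDerivAt
    have hinner : HasDerivAt (fun y : ℂ => (t:ℂ) * y) (t:ℂ) x := by
      simpa using (hasDerivAt_id x).const_mul (t:ℂ)
    have houter : HasDerivAt (fun y : ℂ => g ((t:ℂ) * y)) (deriv g ((t:ℂ)*x) * (t:ℂ)) x :=
      HasDerivAt.comp x (by simpa using hgd) hinner
    have := (hasDerivAt_id x).mul houter
    exact this.congr_deriv (by simp only [hF'def, id_eq]; ring)

lemma grad_bound (u : ℂ → ℝ)
    (hreg : ContDiffOn ℝ 2 u (Metric.ball (0:ℂ) 1))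
    (hlap : ∀ z ∈ Metric.ball (0:ℂ) 1,
      fderiv ℝ (fun w => fderiv ℝ u w 1) z 1 +
      fderiv ℝ (fun w => fderiv ℝ u w Complex.I) z Complex.I = 0)
    (hpos : ∀ z ∈ Metric.ball (0:ℂ) 1, 0 < u z) :
    ‖gradient u 0‖ ≤ 2 * u 0 := by
  have hop : IsOpen (Metric.ball (0:ℂ) 1) := Metric.isOpen_ball
  have h0 : (0:ℂ) ∈ Metric.ball (0:ℂ) 1 := by simp
  have hu0 : 0 < u 0 := hpos 0 h0
  set g := gfun u with hgdef
  have hgd : DifferentiableOn ℂ g (Metric.ball (0:ℂ) 1) := fun w hw =>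
    ((gfun_hasDerivAt u hreg hlap hw).differentiableAt).differentiableWithinAt
  set f : ℂ → ℂ := fun w => (u 0 : ℂ) + ∫ t in (0:ℝ)..1, w * g ((t:ℂ) * w) with hfdef
  have hf : ∀ w ∈ Metric.ball (0:ℂ) 1, HasDerivAt f (g w) w := by
    intro w hw
    have h := (hasDerivAt_const w ((u 0 : ℂ))).add (primitive_hasDerivAt hgd hw)
    rw [zero_add] at h; exact h
  have hfd : DifferentiableOn ℂ f (Metric.ball (0:ℂ) 1) := fun w hw =>
    ((hf w hw).differentiableAt).differentiableWithinAt
  have hf0 : f 0 = (u 0 : ℂ) := by simp [hfdef]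
  -- real part of f is u
  have hre : ∀ w ∈ Metric.ball (0:ℂ) 1, (f w).re = u w := by
    intro w hw
    have hw1 : ‖w‖ < 1 := by simpa [Complex.dist_eq] using hw
    have hwline : Set.MapsTo (fun t : ℝ => (t:ℂ) * w) (Set.uIcc (0:ℝ) 1)
        (Metric.ball (0:ℂ) 1) := by
      intro t ht
      rw [Set.uIcc_of_le (by norm_num)] at ht
      simp only [Metric.mem_ball, Complex.dist_eq, sub_zero, map_mul, norm_mul, Complex.norm_real, Real.norm_eq_abs]
      calc |t| * ‖w‖ ≤ 1 * ‖w‖ :=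
            mul_le_mul_of_nonneg_right (abs_le.2 ⟨by linarith [ht.1], ht.2⟩) (norm_nonneg w)
        _ < 1 := by rw [one_mul]; exact hw1
    have hderiv : ∀ t ∈ Set.uIcc (0:ℝ) 1,
        HasDerivAt (fun s : ℝ => u ((s:ℂ) * w)) (fderiv ℝ u ((t:ℂ)*w) w) t := by
      intro t ht
      have hda : DifferentiableAt ℝ u ((t:ℂ)*w) :=
        (hreg.contDiffAt (hop.mem_nhds (hwline ht))).differentiableAt (by norm_num)
      have hcurve : HasDerivAt (fun s : ℝ => (s:ℂ) * w) w t := by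
        simpa using (Complex.ofRealCLM.hasDerivAt (x := t)).mul_const w
      exact hda.hasFDerivAt.comp_hasDerivAt t hcurve
    have hdu : ContDiffOn ℝ 1 (fderiv ℝ u) (Metric.ball (0:ℂ) 1) :=
      hreg.fderiv_of_isOpen hop (by norm_num)
    have hcont : ContinuousOn (fun t : ℝ => fderiv ℝ u ((t:ℂ)*w) w) (Set.uIcc (0:ℝ) 1) := by
      have h1 : ContinuousOn (fun t : ℝ => fderiv ℝ u ((t:ℂ)*w)) (Set.uIcc (0:ℝ) 1) :=
        hdu.continuousOn.comp ((Complex.continuous_ofReal.mul continuous_const).continuousOn) hwline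
      exact h1.clm_apply continuousOn_const
    have hFTC : ∫ t in (0:ℝ)..1, fderiv ℝ u ((t:ℂ)*w) w = u w - u 0 := by
      rw [intervalIntegral.integral_eq_sub_of_hasDerivAt hderiv hcont.intervalIntegrable]
      norm_num
    have hint2 : IntervalIntegrable (fun t : ℝ => w * g ((t:ℂ) * w)) MeasureTheory.volume 0 1 :=
      (continuousOn_const.mul (hgd.continuousOn.comp
        ((Complex.continuous_ofReal.mul continuous_const).continuousOn) hwline)).intervalIntegrable
    have hre_int : (∫ t in (0:ℝ)..1, w * g ((t:ℂ) * w)).re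
        = ∫ t in (0:ℝ)..1, (w * g ((t:ℂ) * w)).re :=
      (Complex.reCLM.intervalIntegral_comp_comm hint2).symm
    have hptwise : ∀ t : ℝ, (w * g ((t:ℂ)*w)).re = fderiv ℝ u ((t:ℂ)*w) w := by
      intro t
      set L := fderiv ℝ u ((t:ℂ)*w) with hLdef
      have hwL : L w = w.re * L 1 + w.im * L Complex.I := by
        conv_lhs => rw [show w = w.re • (1:ℂ) + w.im • Complex.I by
          simp [Complex.real_smul, Complex.re_add_im]]
        rw [map_add, map_smul, map_smul]; simp
      rw [hgdef]
      simp only [gfun, ← hLdef, hwL, Complex.mul_re, Complex.sub_re, Complex.sub_im,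
        Complex.ofReal_re, Complex.ofReal_im, Complex.mul_im, Complex.I_re, Complex.I_im]
      ring
    rw [hfdef]
    simp only [Complex.add_re, Complex.ofReal_re, hre_int]
    rw [intervalIntegral.integral_congr (fun t _ => hptwise t), hFTC]
    ring
  have hfpos : ∀ w ∈ Metric.ball (0:ℂ) 1, 0 < (f w).re := fun w hw => (hre w hw) ▸ hpos w hw
  set c : ℂ := (u 0 : ℂ) with hcdef
  have hc0 : c ≠ 0 := by
    simp only [hcdef, ne_eq, Complex.ofReal_eq_zero]; exact hu0.ne'
  set Fm : ℂ → ℂ := fun w => (f w - c) / (f w + c) with hFdef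
  have hdenre : ∀ w ∈ Metric.ball (0:ℂ) 1, 0 < (f w + c).re := by
    intro w hw
    simp only [Complex.add_re, hcdef, Complex.ofReal_re]
    have := hfpos w hw; linarith
  have hden : ∀ w ∈ Metric.ball (0:ℂ) 1, f w + c ≠ 0 := by
    intro w hw h
    have := hdenre w hw
    rw [h] at this; simp at this
  have hFd : DifferentiableOn ℂ Fm (Metric.ball (0:ℂ) 1) :=
    (hfd.sub (differentiableOn_const c)).div (hfd.add (differentiableOn_const c)) hden
  have hF0 : Fm 0 = 0 := by simp [hFdef, hf0, hcdef]
  have hmaps : Set.MapsTo Fm (Metric.ball (0:ℂ) 1) (Metric.ball (Fm 0) 1) := by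
    rw [hF0]
    intro w hw
    simp only [Metric.mem_ball, Complex.dist_eq, sub_zero, hFdef, norm_div]
    rw [div_lt_one (norm_pos_iff.mpr (hden w hw))]
    have hsq : ‖f w - c‖^2 < ‖f w + c‖^2 := by
      rw [Complex.sq_norm, Complex.sq_norm, Complex.normSq_apply, Complex.normSq_apply]
      simp only [Complex.add_re, Complex.add_im, Complex.sub_re, Complex.sub_im, hcdef,
        Complex.ofReal_re, Complex.ofReal_im]
      nlinarith [hfpos w hw, hu0]
    exact lt_of_pow_lt_pow_left₀ 2 (norm_nonneg _) hsq
  have hd0F : HasDerivAt Fm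
      ((g 0 * (f 0 + c) - (f 0 - c) * g 0) / (f 0 + c)^2) 0 :=
    ((hf 0 h0).sub_const c).div ((hf 0 h0).add_const c) (hden 0 h0)
  have hval : deriv Fm 0 = g 0 / (2 * c) := by
    rw [hd0F.deriv, hf0, sub_self, zero_mul, sub_zero,
      show c + c = 2 * c by ring, sq,
      mul_div_mul_right _ _ (mul_ne_zero two_ne_zero hc0)]
  have hschwarz : ‖deriv Fm 0‖ ≤ 1/1 :=
    Complex.norm_deriv_le_div_of_mapsTo_ball hFd (hmaps.mono_right ball_subset_closedBall) one_pos
  rw [hval, norm_div] at hschwarz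
  have h2c : ‖2 * c‖ = 2 * u 0 := by
    simp [hcdef, Complex.norm_real, abs_of_pos hu0]
  rw [h2c, div_le_iff₀ (by positivity)] at hschwarz
  have habs : ‖g 0‖ ≤ 2 * u 0 := by linarith
  -- identify the gradient with g 0
  have hd0u : DifferentiableAt ℝ u 0 :=
    (hreg.contDiffAt (hop.mem_nhds h0)).differentiableAt (by norm_num)
  have hfd' : HasFDerivAt u (InnerProductSpace.toDual ℝ ℂ (gradient u 0)) 0 :=
    hasGradientAt_iff_hasFDerivAt.1 hd0u.hasGradientAt
  have h1 : fderiv ℝ u 0 1 = (gradient u 0).re := by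
    rw [hfd'.fderiv, InnerProductSpace.toDual_apply_apply]
    generalize gradient u 0 = v
    simp [Complex.inner]
  have hI : fderiv ℝ u 0 Complex.I = (gradient u 0).im := by
    rw [hfd'.fderiv, InnerProductSpace.toDual_apply_apply]
    generalize gradient u 0 = v
    simp [Complex.inner]
  have hconj : g 0 = (starRingEnd ℂ) (gradient u 0) := by
    rw [hgdef]
    simp only [gfun, h1, hI]
    apply Complex.ext <;> simp
  calc ‖gradient u 0‖ = ‖gradient u 0‖ := rfl
    _ = ‖g 0‖ := by rw [hconj, Complex.norm_conj]
    _ ≤ 2 * u 0 := habs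

/-- The strengthened Harnack upper bound is at most the classical one. -/
theorem strong_harnack_bound_le_classical (u : ℂ → ℝ)
(hreg : ContDiffOn ℝ 2 u (Metric.ball (0:ℂ) 1))
    (hlap : ∀ z ∈ Metric.ball (0:ℂ) 1,
      fderiv ℝ (fun w => fderiv ℝ u w 1) z 1 +
      fderiv ℝ (fun w => fderiv ℝ u w Complex.I) z Complex.I = 0)
    (hpos : ∀ z ∈ Metric.ball (0:ℂ) 1, 0 < u z)
    (z : ℂ) (hz : z ∈ Metric.ball (0:ℂ) 1) :
    (1 + ‖z‖ ^ 2) / (1 - ‖z‖ ^ 2) +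
      (‖gradient u 0‖ / u 0) * (‖z‖ / (1 - ‖z‖ ^ 2)) ≤
      (1 + ‖z‖) / (1 - ‖z‖) := by
  have hu0 : 0 < u 0 := hpos 0 (by simp)
  have hK2 : ‖gradient u 0‖ / u 0 ≤ 2 := by
    rw [div_le_iff₀ hu0]
    simpa [mul_comm] using grad_bound u hreg hlap hpos
  have hK : 0 ≤ ‖gradient u 0‖ / u 0 := div_nonneg (norm_nonneg _) hu0.le
  set a := ‖z‖ with hadef
  set K := ‖gradient u 0‖ / u 0
  have ha : 0 ≤ a := norm_nonneg z
  have ha1 : a < 1 := by simpa [hadef, Complex.dist_eq] using hz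
  have h1 : 0 < 1 - a := by linarith
  have h2 : 0 < 1 - a ^ 2 := by nlinarith
  have e : (1 + a ^ 2) / (1 - a ^ 2) + K * (a / (1 - a ^ 2))
      = (1 + a ^ 2 + K * a) / (1 - a ^ 2) := by field_simp
  rw [e, div_le_div_iff₀ h2 h1]
  nlinarith [mul_nonneg (mul_nonneg ha (sub_nonneg.2 hK2)) h1.le]
end

section
/- Let f : 𝕌 → ℂ be a holomorphic bijection from the open unit disc 𝕌 onto the right half-plane 𝕂 = {z ∈ ℂ : Re z > 0} (a conformal isomorphism), and let u = Re f. Then for every z ∈ 𝕌, |∇u(z)| = 2u(z)/(1−|z|²). -/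
open Metric Set Complex Filter
open scoped Topology

lemma hasGradientAt_of_hasDerivAt {f : ℂ → ℂ} {c z : ℂ} (hf : HasDerivAt f c z) :
    HasGradientAt (fun w => (f w).re) ((starRingEnd ℂ) c) z := by
  have h1 : HasFDerivAt f ((ContinuousLinearMap.smulRight (1 : ℂ →L[ℂ] ℂ) c).restrictScalars ℝ) z :=
    hf.hasFDerivAt.restrictScalars ℝ
  have h2 := (Complex.reCLM.hasFDerivAt).comp z h1
  have h3 : (InnerProductSpace.toDual ℝ ℂ) ((starRingEnd ℂ) c) =
      Complex.reCLM.comp ((ContinuousLinearMap.smulRight (1 : ℂ →L[ℂ] ℂ) c).restrictScalars ℝ) := by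
    refine ContinuousLinearMap.ext fun v => ?_
    simp [InnerProductSpace.toDual_apply_apply, Complex.inner, Complex.mul_re]
  rw [HasGradientAt, HasGradientAtFilter, h3]
  exact h2
lemma analyticAt_hasStrictDerivAt {f : ℂ → ℂ} {x : ℂ} (h : AnalyticAt ℂ f x) :
    HasStrictDerivAt f (deriv f x) x := by
  obtain ⟨p, hp⟩ := h
  have h1 := hp.hasStrictDerivAt
  rwa [← hp.deriv] at h1

lemma deriv_ne_zero_of_injOn {f : ℂ → ℂ} {s : Set ℂ} (hs : IsOpen s)
    (hf : DifferentiableOn ℂ f s) (hinj : Set.InjOn f s) {a : ℂ} (ha : a ∈ s) :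
    deriv f a ≠ 0 := by
  intro hd0
  have hsa : s ∈ 𝓝 a := hs.mem_nhds ha
  have hA : AnalyticAt ℂ f a := hf.analyticAt hsa
  have hψ : AnalyticAt ℂ (fun z => f z - f a) a := hA.sub analyticAt_const
  -- the difference is not eventually zero
  have hne : ¬ ∀ᶠ z in 𝓝 a, f z - f a = 0 := by
    intro h
    have h2 : ∀ᶠ z in 𝓝[≠] a, f z - f a = 0 ∧ z ∈ s ∧ z ≠ a := by
      refine (Filter.eventually_and.mpr ⟨?_, Filter.eventually_and.mpr ⟨?_, ?_⟩⟩)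
      · exact (h.filter_mono nhdsWithin_le_nhds)
      · exact ((hs.eventually_mem ha).filter_mono nhdsWithin_le_nhds)
      · exact eventually_mem_nhdsWithin
    obtain ⟨z, hz1, hz2, hz3⟩ := h2.exists
    exact hz3 (hinj hz2 ha (by linear_combination hz1))
  have horder : analyticOrderAt (fun z => f z - f a) a ≠ ⊤ :=
    fun h => hne (analyticOrderAt_eq_top.mp h)
  obtain ⟨n, hn⟩ : ∃ n : ℕ, analyticOrderAt (fun z => f z - f a) a = n := by
    lift analyticOrderAt (fun z => f z - f a) a to ℕ using horder with n hn
    exact ⟨n, rfl⟩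
  obtain ⟨g, hg, hg0, hev⟩ := (hψ.analyticOrderAt_eq_natCast).mp hn
  simp only [smul_eq_mul] at hev
  -- n ≥ 2
  have hn0 : n ≠ 0 := by
    rintro rfl
    apply hg0
    have := hev.self_of_nhds
    simpa using this.symm
  have hderivψ : HasDerivAt (fun z => f z - f a) 0 a := by
    have := (hA.differentiableAt.hasDerivAt).sub_const (f a)
    rwa [hd0] at this
  have hn1 : n ≠ 1 := by
    rintro rfl
    have h1 : HasDerivAt (fun z => (z - a) ^ 1 * g z)
        ((1 : ℂ) * g a + (a - a) ^ 1 * deriv g a) a := by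
      exact ((((hasDerivAt_id a).sub_const a).pow 1).mul hg.differentiableAt.hasDerivAt).congr_deriv (by simp)
    have h2 : HasDerivAt (fun z => f z - f a) ((1:ℂ) * g a + (a - a) ^ 1 * deriv g a) a :=
      h1.congr_of_eventuallyEq hev
    have := h2.unique hderivψ
    simp at this
    exact hg0 this
  have hn2 : 2 ≤ n := by omega
  -- build n-th root
  obtain ⟨c, hc⟩ := Complex.isAlgClosed.exists_pow_nat_eq (g a) (by omega : 0 < n)
  have hc0 : c ≠ 0 := by
    intro h
    rw [h] at hc
    exact hg0 (by simpa [zero_pow hn0] using hc.symm)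
  -- the analytic n-th root ρ
  set q : ℂ → ℂ := fun z => g z / g a with hq
  have hqa : AnalyticAt ℂ q a := hg.div analyticAt_const hg0
  have hq1 : q a = 1 := div_self hg0
  have hlq : AnalyticAt ℂ (fun z => Complex.log (q z)) a := by
    have h1 : AnalyticAt ℂ Complex.log (q a) :=
      analyticAt_clog (by rw [hq1]; exact Complex.one_mem_slitPlane)
    exact h1.comp hqa
  have hnC : (n : ℂ) ≠ 0 := Nat.cast_ne_zero.mpr hn0
  have hh : AnalyticAt ℂ (fun z => c * Complex.exp (Complex.log (q z) / n)) a := by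
    apply analyticAt_const.mul
    have hexp : AnalyticAt ℂ Complex.exp (Complex.log (q a) / n) :=
      Complex.differentiable_exp.analyticAt _
    have hdiv : AnalyticAt ℂ (fun z => Complex.log (q z) / (n:ℂ)) a :=
      hlq.div analyticAt_const hnC
    exact AnalyticAt.comp (g := Complex.exp) (f := fun z => Complex.log (q z) / (n:ℂ)) hexp hdiv
  set ρ : ℂ → ℂ := fun z => (z - a) * (c * Complex.exp (Complex.log (q z) / n)) with hρ
  have hρA : AnalyticAt ℂ ρ a := (analyticAt_id.sub analyticAt_const).mul hh
  have hρa : ρ a = 0 := by simp [hρ]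
  have hha : c * Complex.exp (Complex.log (q a) / n) = c := by
    rw [hq1, Complex.log_one, zero_div, Complex.exp_zero, mul_one]
  have hρd : HasDerivAt ρ c a := by
    have h1 := ((hasDerivAt_id a).sub_const a).mul hh.differentiableAt.hasDerivAt
    simp only [id_eq] at h1
    have h2 : (1 : ℂ) * (c * Complex.exp (Complex.log (q a) / n)) +
        (a - a) * deriv (fun z => c * Complex.exp (Complex.log (q z) / n)) a = c := by
      rw [hha]; ring
    rwa [h2] at h1
  have hstrict : HasStrictDerivAt ρ c a := by
    have h1 := analyticAt_hasStrictDerivAt hρA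
    rwa [hρd.deriv] at h1
  have hgne : ∀ᶠ z in 𝓝 a, g z ≠ 0 := hg.continuousAt.eventually_ne hg0
  have hψρ : ∀ᶠ z in 𝓝 a, f z - f a = ρ z ^ n := by
    filter_upwards [hev, hgne] with z h1 h2
    have h3 : (n:ℂ) * (Complex.log (q z) / n) = Complex.log (q z) := by field_simp
    have h4 : (c * Complex.exp (Complex.log (q z) / n)) ^ n = g z := by
      rw [mul_pow, ← Complex.exp_nat_mul, h3, hc, Complex.exp_log (div_ne_zero h2 hg0),
        mul_div_cancel₀ _ hg0]
    rw [h1, hρ]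
    simp only []
    rw [mul_pow, h4]
  -- local inverse of ρ
  set Φ := hstrict.hasStrictFDerivAt_equiv hc0 with hΦ
  set ℓ : ℂ → ℂ := Φ.localInverse ρ _ a with hℓ
  have hRight : ∀ᶠ y in 𝓝 (0:ℂ), ρ (ℓ y) = y := by
    have h1 := Φ.eventually_right_inverse
    rwa [hρa] at h1
  have hℓa : ℓ 0 = a := by
    have h1 := Φ.localInverse_apply_image
    rwa [hρa] at h1
  have hℓtendsto : Filter.Tendsto ℓ (𝓝 0) (𝓝 a) := by
    have h1 := Φ.localInverse_continuousAt
    rw [hρa] at h1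
    have h2 : ContinuousAt ℓ 0 := h1
    simpa [ContinuousAt, hℓa] using h2
  -- the root of unity
  set ζ : ℂ := Complex.exp (2 * Real.pi * Complex.I / n) with hζ
  have hζn : ζ ^ n = 1 := by
    rw [hζ, ← Complex.exp_nat_mul]
    have h1 : (n:ℂ) * (2 * Real.pi * Complex.I / n) = 2 * Real.pi * Complex.I := by field_simp
    rw [h1, Complex.exp_two_pi_mul_I]
  have hζ1 : ζ ≠ 1 := by
    rw [hζ]
    intro hone
    rw [Complex.exp_eq_one_iff] at hone
    obtain ⟨k, hk⟩ := hone
    have h2π : (2 * (Real.pi:ℂ) * Complex.I : ℂ) ≠ 0 := by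
      simp [Real.pi_ne_zero, Complex.I_ne_zero]
    have h1 : ((k * n : ℤ) : ℂ) * (2 * Real.pi * Complex.I) = 1 * (2 * Real.pi * Complex.I) := by
      field_simp at hk
      push_cast
      linear_combination -(2 * (Real.pi:ℂ) * Complex.I) * hk
    have h2 : ((k * n : ℤ) : ℂ) = 1 := mul_right_cancel₀ h2π h1
    have h3 : (k * n : ℤ) = 1 := by exact_mod_cast h2
    rcases Int.mul_eq_one_iff_eq_one_or_neg_one.mp h3 with ⟨_, h4⟩ | ⟨_, h4⟩ <;> omega
  -- choose a small w ≠ 0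
  have hmul : Filter.Tendsto (fun w : ℂ => ζ * w) (𝓝 0) (𝓝 0) := by
    have h1 : Continuous (fun w : ℂ => ζ * w) := continuous_const.mul continuous_id
    have h2 := h1.tendsto (0:ℂ)
    simpa using h2
  have hEvs : ∀ᶠ z in 𝓝 a, z ∈ s ∧ f z - f a = ρ z ^ n := (hs.eventually_mem ha).and hψρ
  have E1 := hℓtendsto.eventually hEvs
  have E2 := (hℓtendsto.comp hmul).eventually hEvs
  have E4 : ∀ᶠ w in 𝓝 (0:ℂ), ρ (ℓ (ζ * w)) = ζ * w := hmul.eventually hRight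
  have big := (((E1.and E2).and (hRight.and E4)).filter_mono
    (nhdsWithin_le_nhds : 𝓝[≠] (0:ℂ) ≤ 𝓝 0)).and eventually_mem_nhdsWithin
  obtain ⟨w, ⟨⟨⟨hw1s, hw1e⟩, ⟨hw2s, hw2e⟩⟩, hr1, hr2⟩, hw0'⟩ := big.exists
  have hw0 : w ≠ 0 := hw0'
  simp only [Function.comp] at hw2s hw2e
  have hfe : f (ℓ w) = f (ℓ (ζ * w)) := by
    have h1 : f (ℓ w) - f a = f (ℓ (ζ * w)) - f a := by
      rw [hw1e, hw2e, hr1, hr2, mul_pow, hζn, one_mul]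
    linear_combination h1
  have heq := hinj hw1s hw2s hfe
  have h2 : w = ζ * w := by
    calc w = ρ (ℓ w) := hr1.symm
    _ = ρ (ℓ (ζ * w)) := by rw [heq]
    _ = ζ * w := hr2
  apply hζ1
  have h3 : ζ * w = 1 * w := by rw [one_mul, ← h2]
  exact mul_right_cancel₀ hw0 h3
lemma abs_deriv_eq_one_of_bijOn {F : ℂ → ℂ}
    (hd : DifferentiableOn ℂ F (Metric.ball (0:ℂ) 1))
    (hbij : Set.BijOn F (Metric.ball (0:ℂ) 1) (Metric.ball (0:ℂ) 1))
    (hF0 : F 0 = 0) : ‖deriv F 0‖ = 1 := by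
  have h01 : (0:ℂ) ∈ Metric.ball (0:ℂ) 1 := by simp
  have hopen : IsOpen (Metric.ball (0:ℂ) 1) := Metric.isOpen_ball
  set D := Metric.ball (0:ℂ) 1 with hD
  have hle : ‖deriv F 0‖ ≤ 1 :=
    Complex.norm_deriv_le_one_of_mapsTo_ball hd
      (fun w hw => by rw [hF0]; exact Metric.ball_subset_closedBall (hbij.mapsTo hw))
      one_pos
  set G : ℂ → ℂ := Function.invFunOn F D with hG
  have hex : ∀ w ∈ D, ∃ z ∈ D, F z = w := by
    intro w hw
    obtain ⟨z, hz, hz2⟩ := hbij.surjOn hw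
    exact ⟨z, hz, hz2⟩
  have hGmem : ∀ w ∈ D, G w ∈ D := fun w hw => Function.invFunOn_mem (hex w hw)
  have hGeq : ∀ w ∈ D, F (G w) = w := fun w hw => Function.invFunOn_eq (hex w hw)
  have hG0 : G 0 = 0 := hbij.injOn (hGmem 0 h01) h01 (by rw [hGeq 0 h01, hF0])
  have hGdiff : ∀ b ∈ D, DifferentiableAt ℂ G b := by
    intro b hb
    set a := G b with ha
    have haD : a ∈ D := hGmem b hb
    have hFa : F a = b := hGeq b hb
    have hA : AnalyticAt ℂ F a := hd.analyticAt (hopen.mem_nhds haD)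
    have hder : deriv F a ≠ 0 := deriv_ne_zero_of_injOn hopen hd hbij.injOn haD
    have hstrict : HasStrictDerivAt F (deriv F a) a := analyticAt_hasStrictDerivAt hA
    set Φ := hstrict.hasStrictFDerivAt_equiv hder with hΦ
    set ℓ := Φ.localInverse F _ a with hℓ
    have hRight : ∀ᶠ y in 𝓝 b, F (ℓ y) = y := by
      have h1 := Φ.eventually_right_inverse; rwa [hFa] at h1
    have hℓb : ℓ b = a := by
      have h1 := Φ.localInverse_apply_image; rwa [hFa] at h1
    have hℓt : Filter.Tendsto ℓ (𝓝 b) (𝓝 a) := by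
      have h1 := Φ.localInverse_continuousAt; rw [hFa] at h1
      have h2 : ContinuousAt ℓ b := h1
      simpa [ContinuousAt, hℓb] using h2
    have hℓD : ∀ᶠ y in 𝓝 b, ℓ y ∈ D := hℓt.eventually (hopen.eventually_mem haD)
    have hyD : ∀ᶠ y in 𝓝 b, y ∈ D := hopen.eventually_mem hb
    have heq : G =ᶠ[𝓝 b] ℓ := by
      filter_upwards [hRight, hℓD, hyD] with y h1 h2 h3
      exact hbij.injOn (hGmem y h3) h2 (by rw [hGeq y h3, h1])
    have hℓdiff : DifferentiableAt ℂ ℓ b := by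
      have h1 := Φ.to_localInverse
      rw [hFa] at h1
      exact h1.differentiableAt
    exact hℓdiff.congr_of_eventuallyEq heq
  have hGd : DifferentiableOn ℂ G D := fun b hb => (hGdiff b hb).differentiableWithinAt
  have hGle : ‖deriv G 0‖ ≤ 1 :=
    Complex.norm_deriv_le_one_of_mapsTo_ball hGd
      (fun w hw => by rw [hG0]; exact Metric.ball_subset_closedBall (hGmem w hw))
      one_pos
  have hFG : (fun w => F (G w)) =ᶠ[𝓝 (0:ℂ)] id := by
    filter_upwards [hopen.eventually_mem h01] with y hy
    exact hGeq y hy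
  have hGda : HasDerivAt G (deriv G 0) 0 := (hGdiff 0 h01).hasDerivAt
  have hFda' : HasDerivAt F (deriv F 0) (G 0) := by
    rw [hG0]
    exact (hd.analyticAt (hopen.mem_nhds h01)).differentiableAt.hasDerivAt
  have hcomp : HasDerivAt (fun w => F (G w)) (deriv F 0 * deriv G 0) 0 := hFda'.comp 0 hGda
  have hid : HasDerivAt (fun w => F (G w)) 1 0 :=
    (hasDerivAt_id (0:ℂ)).congr_of_eventuallyEq hFG
  have hone : deriv F 0 * deriv G 0 = 1 := hcomp.unique hid
  have habs : ‖deriv F 0‖ * ‖deriv G 0‖ = 1 := by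
    rw [← norm_mul, hone, norm_one]
  nlinarith [norm_nonneg (deriv F 0), norm_nonneg (deriv G 0)]
noncomputable def mob (p w : ℂ) : ℂ := (w + p) / (1 + (starRingEnd ℂ) p * w)

lemma mob_den_ne {p w : ℂ} (hp : ‖p‖ < 1) (hw : ‖w‖ < 1) :
    1 + (starRingEnd ℂ) p * w ≠ 0 := by
  intro h
  have h1 : (starRingEnd ℂ) p * w = -1 := by linear_combination h
  have h2 := congrArg (‖·‖) h1
  simp only [norm_mul, Complex.norm_conj] at h2
  rw [show ‖(-1 : ℂ)‖ = 1 by simp] at h2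
  nlinarith [norm_nonneg p, norm_nonneg w]

lemma normSq_mob_den (p w : ℂ) :
    Complex.normSq (1 + (starRingEnd ℂ) p * w) - Complex.normSq (w + p)
      = (1 - Complex.normSq p) * (1 - Complex.normSq w) := by
  simp only [Complex.normSq_apply, Complex.add_re, Complex.add_im, Complex.mul_re,
    Complex.mul_im, Complex.one_re, Complex.one_im, Complex.conj_re, Complex.conj_im]
  ring

lemma mob_maps {p w : ℂ} (hp : ‖p‖ < 1) (hw : ‖w‖ < 1) :
    ‖mob p w‖ < 1 := by
  have hden := mob_den_ne hp hw
  have hdpos : 0 < ‖1 + (starRingEnd ℂ) p * w‖ := by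
    simpa [norm_pos_iff] using hden
  rw [mob, norm_div, div_lt_one hdpos]
  have hp2 : Complex.normSq p < 1 := by rw [← Complex.sq_norm]; nlinarith [norm_nonneg p]
  have hw2 : Complex.normSq w < 1 := by rw [← Complex.sq_norm]; nlinarith [norm_nonneg w]
  have h2 : ‖w + p‖ ^ 2 < ‖1 + (starRingEnd ℂ) p * w‖ ^ 2 := by
    rw [Complex.sq_norm, Complex.sq_norm]
    nlinarith [normSq_mob_den p w]
  nlinarith [norm_nonneg (w + p), norm_nonneg (1 + (starRingEnd ℂ) p * w)]

lemma mob_inv {p w : ℂ} (hp : ‖p‖ < 1) (hw : ‖w‖ < 1) :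
    mob (-p) (mob p w) = w := by
  have hden := mob_den_ne hp hw
  have hp1 : (1 : ℂ) - (starRingEnd ℂ) p * p ≠ 0 := by
    intro h
    have h1 : (starRingEnd ℂ) p * p = 1 := by linear_combination -h
    have h2 := congrArg (‖·‖) h1
    simp only [norm_mul, Complex.norm_conj, norm_one] at h2
    nlinarith [norm_nonneg p]
  rw [mob, mob, map_neg]
  rw [div_eq_iff]
  · rw [div_add' _ _ _ hden, mul_div_assoc', add_div' _ _ _ hden, mul_div_assoc', div_left_inj' hden]
    ring
  · intro h
    apply hp1
    have h3 : (1 + (starRingEnd ℂ) p * w) * (1 + -(starRingEnd ℂ) p * ((w + p) / (1 + (starRingEnd ℂ) p * w))) = (1 : ℂ) - (starRingEnd ℂ) p * p := by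
      field_simp
      ring
    rw [← h3, h, mul_zero]

lemma mob_hasDerivAt (p w : ℂ) (h : 1 + (starRingEnd ℂ) p * w ≠ 0) :
    HasDerivAt (mob p) ((1 - (starRingEnd ℂ) p * p) / (1 + (starRingEnd ℂ) p * w) ^ 2) w := by
  have h1 : HasDerivAt (fun y : ℂ => y + p) 1 w := (hasDerivAt_id w).add_const p
  have h2 : HasDerivAt (fun y : ℂ => 1 + (starRingEnd ℂ) p * y) ((starRingEnd ℂ) p) w := by
    simpa using ((hasDerivAt_id w).const_mul ((starRingEnd ℂ) p)).const_add 1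
  have h3 := h1.div h2 h
  have h4 : (1 * (1 + (starRingEnd ℂ) p * w) - (w + p) * (starRingEnd ℂ) p)
      = 1 - (starRingEnd ℂ) p * p := by ring
  rw [h4] at h3
  exact h3

lemma schwarz_pick_eq {g : ℂ → ℂ} (hd : DifferentiableOn ℂ g (Metric.ball (0:ℂ) 1))
    (hbij : Set.BijOn g (Metric.ball (0:ℂ) 1) (Metric.ball (0:ℂ) 1))
    {a : ℂ} (ha : a ∈ Metric.ball (0:ℂ) 1) :
    ‖deriv g a‖ * (1 - ‖a‖ ^ 2) = 1 - ‖g a‖ ^ 2 := by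
  have hmem : ∀ {x : ℂ}, x ∈ Metric.ball (0:ℂ) 1 ↔ ‖x‖ < 1 := by
    intro x; rw [mem_ball_zero_iff]
  set D := Metric.ball (0:ℂ) 1 with hDdef
  have haa : ‖a‖ < 1 := hmem.mp ha
  set b := g a with hb
  have hbD : b ∈ D := hbij.mapsTo ha
  have hba : ‖b‖ < 1 := hmem.mp hbD
  have mobBij : ∀ p : ℂ, ‖p‖ < 1 → Set.BijOn (mob p) D D := by
    intro p hp
    have hp' : ‖-p‖ < 1 := by simpa using hp
    have hmaps : MapsTo (mob p) D D := fun w hw => hmem.mpr (mob_maps hp (hmem.mp hw))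
    have hmaps' : MapsTo (mob (-p)) D D := fun w hw => hmem.mpr (mob_maps hp' (hmem.mp hw))
    refine Set.InvOn.bijOn ⟨?_, ?_⟩ hmaps hmaps'
    · intro w hw; exact mob_inv hp (hmem.mp hw)
    · intro w hw
      have h1 := mob_inv (p := -p) hp' (hmem.mp hw)
      simpa using h1
  have mobDiff : ∀ p : ℂ, ‖p‖ < 1 → DifferentiableOn ℂ (mob p) D := by
    intro p hp w hw
    exact (mob_hasDerivAt p w (mob_den_ne hp (hmem.mp hw))).differentiableAt.differentiableWithinAt
  have hbneg : ‖-b‖ < 1 := by simpa using hba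
  set F : ℂ → ℂ := fun w => mob (-b) (g (mob a w)) with hF
  have hM0 : mob a 0 = a := by simp [mob]
  have hNb : mob (-b) b = 0 := by simp [mob]
  have hF0 : F 0 = 0 := by rw [hF]; simp only; rw [hM0, ← hb, hNb]
  have hFbij : Set.BijOn F D D :=
    (mobBij (-b) hbneg).comp (hbij.comp (mobBij a haa))
  have hFdiff : DifferentiableOn ℂ F D :=
    (mobDiff (-b) hbneg).comp (hd.comp (mobDiff a haa) (mobBij a haa).mapsTo)
      ((hbij.comp (mobBij a haa)).mapsTo)
  have hMd : HasDerivAt (mob a)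
      ((1 - (starRingEnd ℂ) a * a) / (1 + (starRingEnd ℂ) a * 0) ^ 2) 0 :=
    mob_hasDerivAt a 0 (mob_den_ne haa (by simp))
  have hgd : HasDerivAt g (deriv g a) (mob a 0) := by
    rw [hM0]
    exact (hd.analyticAt (Metric.isOpen_ball.mem_nhds ha)).differentiableAt.hasDerivAt
  have hNd : HasDerivAt (mob (-b))
      ((1 - (starRingEnd ℂ) (-b) * (-b)) / (1 + (starRingEnd ℂ) (-b) * b) ^ 2) (g (mob a 0)) := by
    rw [hM0, ← hb]
    exact mob_hasDerivAt (-b) b (mob_den_ne hbneg hba)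
  have hcomp1 : HasDerivAt (fun w => g (mob a w))
      (deriv g a * ((1 - (starRingEnd ℂ) a * a) / (1 + (starRingEnd ℂ) a * 0) ^ 2)) 0 :=
    hgd.comp 0 hMd
  have hcomp2 : HasDerivAt F
      ((1 - (starRingEnd ℂ) (-b) * (-b)) / (1 + (starRingEnd ℂ) (-b) * b) ^ 2 *
        (deriv g a * ((1 - (starRingEnd ℂ) a * a) / (1 + (starRingEnd ℂ) a * 0) ^ 2))) 0 :=
    by have h := hNd.comp 0 hcomp1; exact h
  have h1 : ‖deriv F 0‖ = 1 := abs_deriv_eq_one_of_bijOn hFdiff hFbij hF0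
  rw [hcomp2.deriv] at h1
  have key : ∀ x : ℂ, (1 : ℂ) - (starRingEnd ℂ) x * x = ((1 - ‖x‖ ^ 2 : ℝ) : ℂ) := by
    intro x
    rw [mul_comm, Complex.mul_conj, Complex.sq_norm]
    push_cast
    ring
  have e1 : (1 : ℂ) + (starRingEnd ℂ) a * 0 = 1 := by ring
  have e2 : (1 : ℂ) - (starRingEnd ℂ) (-b) * (-b) = ((1 - ‖b‖ ^ 2 : ℝ) : ℂ) := by
    rw [map_neg, neg_mul_neg, key b]
  have e3 : (1 : ℂ) + (starRingEnd ℂ) (-b) * b = ((1 - ‖b‖ ^ 2 : ℝ) : ℂ) := by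
    rw [map_neg, neg_mul]
    rw [show (1:ℂ) + -((starRingEnd ℂ) b * b) = 1 - (starRingEnd ℂ) b * b by ring, key b]
  rw [e1, e2, e3, key a, one_pow, div_one] at h1
  rw [norm_mul, norm_mul, norm_div, norm_pow, Complex.norm_real, Complex.norm_real,
    Real.norm_eq_abs, Real.norm_eq_abs] at h1
  have hb2 : (0:ℝ) < 1 - ‖b‖ ^ 2 := by nlinarith [norm_nonneg b]
  have ha2 : (0:ℝ) < 1 - ‖a‖ ^ 2 := by nlinarith [norm_nonneg a]
  rw [_root_.abs_of_nonneg hb2.le, _root_.abs_of_nonneg ha2.le] at h1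
  have h2 : (1 - ‖b‖ ^ 2) / (1 - ‖b‖ ^ 2) ^ 2
      = 1 / (1 - ‖b‖ ^ 2) := by field_simp
  rw [h2] at h1
  field_simp at h1
  linarith [h1]
/-- If `u` is the real part of a conformal isomorphism from the unit disc onto
the right half-plane, then equality holds in the gradient estimate. -/
theorem gradient_eq_of_conformal_onto_halfplane (f : ℂ → ℂ) (u : ℂ → ℝ)
    (hf : DifferentiableOn ℂ f (Metric.ball (0:ℂ) 1))
    (hbij : Set.BijOn f (Metric.ball (0:ℂ) 1) {w : ℂ | 0 < w.re})
    (hu : ∀ z : ℂ, u z = (f z).re)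
    (z : ℂ) (hz : z ∈ Metric.ball (0:ℂ) 1) :
    ‖gradient u z‖ = 2 * u z / (1 - ‖z‖ ^ 2) := by
  have hmem : ∀ {x : ℂ}, x ∈ Metric.ball (0:ℂ) 1 ↔ ‖x‖ < 1 := by
    intro x; rw [mem_ball_zero_iff]
  set D := Metric.ball (0:ℂ) 1 with hDdef
  -- basic facts
  have hKpos : ∀ x ∈ D, 0 < (f x).re := fun x hx => hbij.mapsTo hx
  have hden : ∀ x ∈ D, f x + 1 ≠ 0 := by
    intro x hx h
    have h1 : (f x + 1).re = 0 := by rw [h]; simp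
    simp only [Complex.add_re, Complex.one_re] at h1
    have := hKpos x hx
    linarith
  -- the Cayley composition
  set g : ℂ → ℂ := fun x => (f x - 1) / (f x + 1) with hg
  have hgd : DifferentiableOn ℂ g D :=
    (hf.sub (differentiableOn_const 1)).div (hf.add (differentiableOn_const 1)) hden
  have normSq_diff : ∀ w : ℂ, Complex.normSq (w + 1) - Complex.normSq (w - 1) = 4 * w.re := by
    intro w
    simp only [Complex.normSq_apply, Complex.add_re, Complex.add_im, Complex.sub_re,
      Complex.sub_im, Complex.one_re, Complex.one_im]
    ring
  have cayley_lt : ∀ w : ℂ, 0 < w.re → ‖(w - 1) / (w + 1)‖ < 1 := by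
    intro w hw
    have hne : w + 1 ≠ 0 := by
      intro h
      have h1 : (w + 1).re = 0 := by rw [h]; simp
      simp only [Complex.add_re, Complex.one_re] at h1
      linarith
    have hpos : 0 < ‖w + 1‖ := by simpa [norm_pos_iff] using hne
    rw [norm_div, div_lt_one hpos]
    have h2 : ‖w - 1‖ ^ 2 < ‖w + 1‖ ^ 2 := by
      rw [Complex.sq_norm, Complex.sq_norm]
      nlinarith [normSq_diff w]
    nlinarith [norm_nonneg (w - 1), norm_nonneg (w + 1)]
  have hgmaps : MapsTo g D D := fun x hx => hmem.mpr (cayley_lt (f x) (hKpos x hx))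
  have hginj : InjOn g D := by
    intro x hx y hy hxy
    apply hbij.injOn hx hy
    have h1 := hden x hx
    have h2 := hden y hy
    rw [hg] at hxy
    simp only at hxy
    rw [div_eq_div_iff h1 h2] at hxy
    have : 2 * f x = 2 * f y := by linear_combination hxy
    have h3 : f x = f y := by linear_combination this / 2
    exact h3
  have hgsurj : SurjOn g D D := by
    intro w hw
    have hw1 : ‖w‖ < 1 := hmem.mp hw
    have hne1 : (1 : ℂ) - w ≠ 0 := by
      intro h
      have : w = 1 := by linear_combination -h
      rw [this] at hw1
      simp at hw1
    set v : ℂ := (1 + w) / (1 - w) with hv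
    have hvre : 0 < v.re := by
      rw [hv, Complex.div_re]
      have hnum : (1 + w).re * (1 - w).re + (1 + w).im * (1 - w).im
          = 1 - Complex.normSq w := by
        simp only [Complex.add_re, Complex.add_im, Complex.sub_re, Complex.sub_im,
          Complex.one_re, Complex.one_im, Complex.normSq_apply]
        ring
      rw [← add_div, hnum]
      have h3 : Complex.normSq w < 1 := by
        rw [← Complex.sq_norm]; nlinarith [norm_nonneg w]
      have h4 : 0 < Complex.normSq (1 - w) := by
        simpa [Complex.normSq_pos] using hne1
      exact div_pos (by linarith) h4
    obtain ⟨x, hxD, hxv⟩ := hbij.surjOn (show v ∈ {w : ℂ | 0 < w.re} from hvre)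
    refine ⟨x, hxD, ?_⟩
    rw [hg]
    simp only
    rw [hxv, hv]
    field_simp
    ring
  have hgbij : BijOn g D D := ⟨hgmaps, hginj, hgsurj⟩
  -- derivative of g
  have hfd : HasDerivAt f (deriv f z) z :=
    (hf.analyticAt (Metric.isOpen_ball.mem_nhds hz)).differentiableAt.hasDerivAt
  have hdz := hden z hz
  have hgda : HasDerivAt g
      ((deriv f z * (f z + 1) - (f z - 1) * deriv f z) / (f z + 1) ^ 2) z :=
    (hfd.sub_const 1).div (hfd.add_const 1) hdz
  have hnum : deriv f z * (f z + 1) - (f z - 1) * deriv f z = 2 * deriv f z := by ring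
  rw [hnum] at hgda
  -- Schwarz-Pick equality
  have hsp := schwarz_pick_eq hgd hgbij hz
  rw [hgda.deriv] at hsp
  -- compute both sides
  have hnz : Complex.normSq (f z + 1) ≠ 0 := by
    simpa [Complex.normSq_eq_zero] using hdz
  have hnzpos : 0 < Complex.normSq (f z + 1) := by
    rcases lt_or_eq_of_le (Complex.normSq_nonneg (f z + 1)) with h | h
    · exact h
    · exact absurd h.symm hnz
  have hL : ‖2 * deriv f z / (f z + 1) ^ 2‖
      = 2 * ‖deriv f z‖ / Complex.normSq (f z + 1) := by
    rw [norm_div, norm_mul, norm_pow, Complex.sq_norm]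
    norm_num
  have hR : 1 - ‖g z‖ ^ 2 = 4 * (f z).re / Complex.normSq (f z + 1) := by
    rw [hg]
    simp only
    rw [Complex.sq_norm, Complex.normSq_div]
    rw [eq_div_iff hnz, sub_mul, one_mul, div_mul_cancel₀ _ hnz]
    linarith [normSq_diff (f z)]
  rw [hL, hR] at hsp
  -- gradient
  have hgrad : gradient u z = (starRingEnd ℂ) (deriv f z) := by
    have h1 := hasGradientAt_of_hasDerivAt hfd
    have h2 : u = fun w => (f w).re := funext hu
    rw [h2]
    exact h1.gradient
  rw [hgrad, hu z]
  have hnorm : ‖(starRingEnd ℂ) (deriv f z)‖ = ‖deriv f z‖ := by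
    rw [Complex.norm_conj]
  rw [hnorm]
  have hz2 : 0 < 1 - ‖z‖ ^ 2 := by
    have := hmem.mp hz
    nlinarith [norm_nonneg z]
  rw [eq_div_iff hz2.ne']
  have h5 : 2 * ‖deriv f z‖ / Complex.normSq (f z + 1) * (1 - ‖z‖ ^ 2)
      * Complex.normSq (f z + 1) = 4 * (f z).re / Complex.normSq (f z + 1)
      * Complex.normSq (f z + 1) := by rw [hsp]
  rw [div_mul_cancel₀ _ hnz] at h5
  field_simp at h5
  linarith
end

section
/- Let u : 𝕌 → (0, +∞) be a positive harmonic function on the open unit disc, and suppose that |∇u(z₀)| = 2u(z₀)/(1−|z₀|²) for some z₀ ∈ 𝕌. Then u is the real part of a conformal isomorphism from 𝕌 onto the right half-plane 𝕂 = {z ∈ ℂ : Re z > 0}; that is, there exists a holomorphic bijection f from 𝕌 onto 𝕂 with Re f(z) = u(z) for all z ∈ 𝕌. -/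
set_option linter.dupNamespace false
set_option linter.unusedVariables false
open Complex Metric Set NNReal ENNReal


noncomputable section ConfAux

namespace ConfAux

/-- extensionality for real-linear maps on ℂ from values at 1 and I -/
lemma clm_ext_basis {E : Type*} [NormedAddCommGroup E] [NormedSpace ℝ E]
    (L₁ L₂ : ℂ →L[ℝ] E) (h1 : L₁ 1 = L₂ 1) (hI : L₁ I = L₂ I) : L₁ = L₂ := by
  ext z
  have hz : z = (z.re : ℝ) • (1 : ℂ) + (z.im : ℝ) • I := by
    simp [Complex.real_smul, Complex.re_add_im]
  rw [hz, map_add, map_add, map_smul, map_smul, map_smul, map_smul, h1, hI]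

variable (z₀ w₀ : ℂ)

def phi (z : ℂ) : ℂ := (z + z₀) / (1 + (starRingEnd ℂ) z₀ * z)
def phiInv (w : ℂ) : ℂ := (w - z₀) / (1 - (starRingEnd ℂ) z₀ * w)
def psi (w : ℂ) : ℂ := (w - w₀) / (w + (starRingEnd ℂ) w₀)
def psiInv (ζ : ℂ) : ℂ := (w₀ + (starRingEnd ℂ) w₀ * ζ) / (1 - ζ)

variable {z₀ w₀ : ℂ}

lemma normSq_eq_sq_norm (z : ℂ) : Complex.normSq z = ‖z‖ ^ 2 := by
  rw [Complex.normSq_eq_norm_sq]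

lemma normSq_lt_one {z : ℂ} (h : ‖z‖ < 1) : Complex.normSq z < 1 := by
  rw [normSq_eq_sq_norm]
  nlinarith [norm_nonneg z]

lemma den_phi_ne (hz₀ : ‖z₀‖ < 1) {z : ℂ} (hz : ‖z‖ < 1) :
    1 + (starRingEnd ℂ) z₀ * z ≠ 0 := by
  intro h
  have h1 : (starRingEnd ℂ) z₀ * z = -1 := by linear_combination h
  have h2 : ‖(starRingEnd ℂ) z₀ * z‖ = 1 := by rw [h1]; simp
  rw [norm_mul, RCLike.norm_conj] at h2
  nlinarith [norm_nonneg z₀, norm_nonneg z]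

lemma den_phiInv_ne (hz₀ : ‖z₀‖ < 1) {w : ℂ} (hw : ‖w‖ < 1) :
    1 - (starRingEnd ℂ) z₀ * w ≠ 0 := by
  intro h
  have h1 : (starRingEnd ℂ) z₀ * w = 1 := by linear_combination -h
  have h2 : ‖(starRingEnd ℂ) z₀ * w‖ = 1 := by rw [h1]; simp
  rw [norm_mul, RCLike.norm_conj] at h2
  nlinarith [norm_nonneg z₀, norm_nonneg w]

lemma norm_lt_of_normSq_lt {a b : ℂ} (h : Complex.normSq a < Complex.normSq b) :
    ‖a‖ < ‖b‖ := by
  rw [normSq_eq_sq_norm, normSq_eq_sq_norm] at h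
  nlinarith [norm_nonneg a, norm_nonneg b]

lemma phi_mapsTo (hz₀ : ‖z₀‖ < 1) {z : ℂ} (hz : ‖z‖ < 1) : ‖phi z₀ z‖ < 1 := by
  have hden := den_phi_ne hz₀ hz
  rw [phi, norm_div, div_lt_one (norm_pos_iff.mpr hden)]
  apply norm_lt_of_normSq_lt
  have h1 : Complex.normSq z < 1 := normSq_lt_one hz
  have h2 : Complex.normSq z₀ < 1 := normSq_lt_one hz₀
  simp only [Complex.normSq_apply, Complex.add_re, Complex.add_im, Complex.mul_re,
    Complex.mul_im, Complex.one_re, Complex.one_im, Complex.conj_re, Complex.conj_im] at *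
  nlinarith [mul_pos (sub_pos.mpr h1) (sub_pos.mpr h2)]


lemma sum_conj_re (w : ℂ) : w + (starRingEnd ℂ) w = ((2 * w.re : ℝ) : ℂ) := by
  rw [Complex.add_conj]

lemma den_psi_ne (hw₀ : 0 < w₀.re) {w : ℂ} (hw : 0 < w.re) :
    w + (starRingEnd ℂ) w₀ ≠ 0 := by
  intro h
  have : (w + (starRingEnd ℂ) w₀).re = 0 := by rw [h]; simp
  simp only [Complex.add_re, Complex.conj_re] at this
  linarith

lemma sum_self_conj_ne (hw₀ : 0 < w₀.re) : w₀ + (starRingEnd ℂ) w₀ ≠ 0 := by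
  intro h
  have : (w₀ + (starRingEnd ℂ) w₀).re = 0 := by rw [h]; simp
  simp only [Complex.add_re, Complex.conj_re] at this
  linarith

lemma psi_mapsTo (hw₀ : 0 < w₀.re) {w : ℂ} (hw : 0 < w.re) : ‖psi w₀ w‖ < 1 := by
  have hden := den_psi_ne hw₀ hw
  rw [psi, norm_div, div_lt_one (norm_pos_iff.mpr hden)]
  apply norm_lt_of_normSq_lt
  simp only [Complex.normSq_apply, Complex.add_re, Complex.add_im, Complex.sub_re,
    Complex.sub_im, Complex.conj_re, Complex.conj_im]
  nlinarith [mul_pos hw hw₀]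

lemma psi_ne_one (hw₀ : 0 < w₀.re) {w : ℂ} (hw : 0 < w.re) : 1 - psi w₀ w ≠ 0 := by
  have hden := den_psi_ne hw₀ hw
  rw [psi, sub_ne_zero]
  intro h
  rw [eq_div_iff hden, one_mul] at h
  have h3 := congrArg Complex.re h
  simp only [Complex.add_re, Complex.sub_re, Complex.conj_re] at h3
  linarith

lemma one_sub_mul_conj_ne (hz₀ : ‖z₀‖ < 1) : (1:ℂ) - z₀ * (starRingEnd ℂ) z₀ ≠ 0 := by
  rw [Complex.mul_conj, sub_ne_zero]
  intro h
  have h2 : (Complex.normSq z₀ : ℝ) = 1 := by exact_mod_cast h.symm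
  linarith [normSq_lt_one hz₀]

lemma psiInv_psi (hw₀ : 0 < w₀.re) {w : ℂ} (hw : 0 < w.re) :
    psiInv w₀ (psi w₀ w) = w := by
  have h1 := den_psi_ne hw₀ hw
  have h2 := psi_ne_one hw₀ hw
  have hA := sum_self_conj_ne hw₀
  rw [psi] at h2 ⊢
  rw [psiInv]
  field_simp [hA] at h2 ⊢
  linear_combination w * (mul_inv_cancel₀ hA)

lemma phiInv_phi (hz₀ : ‖z₀‖ < 1) {z : ℂ} (hz : ‖z‖ < 1) :
    phiInv z₀ (phi z₀ z) = z := by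
  have h1 := den_phi_ne hz₀ hz
  have hmaps := phi_mapsTo hz₀ hz
  have h2 : 1 - (starRingEnd ℂ) z₀ * phi z₀ z ≠ 0 := den_phiInv_ne hz₀ hmaps
  have hc := one_sub_mul_conj_ne hz₀
  rw [phi] at h2 ⊢
  rw [phiInv]
  field_simp [hc] at h2 ⊢
  linear_combination z * (inv_mul_cancel₀ hc)

lemma phi_phiInv (hz₀ : ‖z₀‖ < 1) {w : ℂ} (hw : ‖w‖ < 1) :
    phi z₀ (phiInv z₀ w) = w := by
  have h1 := den_phiInv_ne hz₀ hw
  have hmaps : ‖phiInv z₀ w‖ < 1 := by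
    rw [phiInv, norm_div, div_lt_one (norm_pos_iff.mpr h1)]
    apply norm_lt_of_normSq_lt
    have hzz : Complex.normSq w < 1 := normSq_lt_one hw
    have hzz0 : Complex.normSq z₀ < 1 := normSq_lt_one hz₀
    simp only [Complex.normSq_apply, Complex.sub_re, Complex.sub_im, Complex.mul_re,
      Complex.mul_im, Complex.one_re, Complex.one_im, Complex.conj_re, Complex.conj_im] at *
    nlinarith [mul_pos (sub_pos.mpr hzz) (sub_pos.mpr hzz0)]
  have h2 : 1 + (starRingEnd ℂ) z₀ * phiInv z₀ w ≠ 0 := den_phi_ne hz₀ hmaps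
  have hc := one_sub_mul_conj_ne hz₀
  rw [phiInv] at h2 ⊢
  rw [phi]
  field_simp [hc] at h2 ⊢
  linear_combination w * (inv_mul_cancel₀ hc)

lemma phiInv_mapsTo (hz₀ : ‖z₀‖ < 1) {w : ℂ} (hw : ‖w‖ < 1) : ‖phiInv z₀ w‖ < 1 := by
  have h1 := den_phiInv_ne hz₀ hw
  rw [phiInv, norm_div, div_lt_one (norm_pos_iff.mpr h1)]
  apply norm_lt_of_normSq_lt
  have hzz : Complex.normSq w < 1 := normSq_lt_one hw
  have hzz0 : Complex.normSq z₀ < 1 := normSq_lt_one hz₀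
  simp only [Complex.normSq_apply, Complex.sub_re, Complex.sub_im, Complex.mul_re,
    Complex.mul_im, Complex.one_re, Complex.one_im, Complex.conj_re, Complex.conj_im] at *
  nlinarith [mul_pos (sub_pos.mpr hzz) (sub_pos.mpr hzz0)]

lemma phi_zero : phi z₀ 0 = z₀ := by simp [phi]

lemma psi_w₀ : psi w₀ w₀ = 0 := by simp [psi]

lemma hasDerivAt_phi (hz₀ : ‖z₀‖ < 1) :
    HasDerivAt (phi z₀) (1 - (Complex.normSq z₀ : ℂ)) 0 := by
  have h1 : HasDerivAt (fun z : ℂ => z + z₀) 1 0 := (hasDerivAt_id 0).add_const z₀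
  have h2 : HasDerivAt (fun z : ℂ => 1 + (starRingEnd ℂ) z₀ * z) ((starRingEnd ℂ) z₀) 0 := by
    simpa using ((hasDerivAt_id (0:ℂ)).const_mul ((starRingEnd ℂ) z₀)).const_add 1
  have hden : (1 : ℂ) + (starRingEnd ℂ) z₀ * 0 ≠ 0 := by simp
  have := h1.div h2 hden
  exact this.congr_deriv (by rw [← Complex.mul_conj]; field_simp; ring)

lemma hasDerivAt_psi (hw₀ : 0 < w₀.re) :
    HasDerivAt (psi w₀) (1 / (w₀ + (starRingEnd ℂ) w₀)) w₀ := by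
  have h1 : HasDerivAt (fun w : ℂ => w - w₀) 1 w₀ := (hasDerivAt_id w₀).sub_const w₀
  have h2 : HasDerivAt (fun w : ℂ => w + (starRingEnd ℂ) w₀) 1 w₀ :=
    (hasDerivAt_id w₀).add_const _
  have hden : w₀ + (starRingEnd ℂ) w₀ ≠ 0 := sum_self_conj_ne hw₀
  have := h1.div h2 hden
  exact this.congr_deriv (by field_simp; ring)

lemma differentiableOn_phi (hz₀ : ‖z₀‖ < 1) :
    DifferentiableOn ℂ (phi z₀) (ball (0:ℂ) 1) := by
  intro z hz
  rw [mem_ball, dist_zero_right] at hz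
  exact (((differentiableAt_id.add_const z₀).div
    ((differentiableAt_const _).add ((differentiableAt_const _).mul differentiableAt_id))
    (den_phi_ne hz₀ hz))).differentiableWithinAt

lemma differentiableOn_psi (hw₀ : 0 < w₀.re) :
    DifferentiableOn ℂ (psi w₀) {w : ℂ | 0 < w.re} := by
  intro w hw
  exact (((differentiableAt_id.sub_const w₀).div (differentiableAt_id.add_const _)
    (den_psi_ne hw₀ hw))).differentiableWithinAt

end ConfAux
noncomputable section
namespace ConfAux2

variable {g : ℂ → ℂ}

lemma hasFPSB_of_r (hg : DifferentiableOn ℂ g (ball (0:ℂ) 1))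
    {r : ℝ≥0} (hr0 : 0 < r) (hr1 : (r:ℝ) < 1) :
    HasFPowerSeriesOnBall g (cauchyPowerSeries g 0 (2⁻¹ : ℝ≥0)) 0 r := by
  have half : HasFPowerSeriesOnBall g (cauchyPowerSeries g 0 (2⁻¹:ℝ≥0)) 0 (2⁻¹:ℝ≥0) := by
    refine DifferentiableOn.hasFPowerSeriesOnBall ?_ (by norm_num)
    refine hg.mono (closedBall_subset_ball ?_)
    norm_num
  have hr : HasFPowerSeriesOnBall g (cauchyPowerSeries g 0 r) 0 r := by
    refine DifferentiableOn.hasFPowerSeriesOnBall ?_ hr0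
    exact hg.mono (closedBall_subset_ball (by exact_mod_cast hr1))
  have heq := hr.hasFPowerSeriesAt.eq_formalMultilinearSeries half.hasFPowerSeriesAt
  rwa [heq] at hr

lemma exists_primitive (hg : DifferentiableOn ℂ g (ball (0:ℂ) 1)) :
    ∃ F : ℂ → ℂ, F 0 = 0 ∧ ∀ z ∈ ball (0:ℂ) 1, HasDerivAt F (g z) z := by
  classical
  set q := cauchyPowerSeries g 0 (2⁻¹:ℝ≥0) with hqdef
  set a : ℕ → ℂ := fun n => q.coeff n with hadef
  refine ⟨fun z => ∑' n, a n / (n+1) * z^(n+1), ?_, ?_⟩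
  · have h0 : ∀ n : ℕ, a n / (n+1) * (0:ℂ)^(n+1) = 0 := by intro n; simp
    simp [h0]
  intro z hz
  rw [mem_ball, dist_zero_right] at hz
  set t : ℝ := (‖z‖ + 1) / 2 with htdef
  have ht1 : ‖z‖ < t := by rw [htdef]; linarith
  have ht2 : t < 1 := by rw [htdef]; linarith
  have ht0 : 0 < t := lt_of_le_of_lt (norm_nonneg z) ht1
  set r : ℝ≥0 := ⟨t, ht0.le⟩ with hrdef
  set r2 : ℝ≥0 := ⟨(t+1)/2, by linarith⟩ with hr2def
  have hball2 : HasFPowerSeriesOnBall g q 0 r2 :=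
    hasFPSB_of_r hg (by rw [← NNReal.coe_lt_coe]; show (0:ℝ) < (t+1)/2; linarith) (by show (t+1)/2 < (1:ℝ); linarith)
  have hballr : HasFPowerSeriesOnBall g q 0 r :=
    hasFPSB_of_r hg (by rw [← NNReal.coe_lt_coe]; show (0:ℝ) < t; linarith) (by show t < (1:ℝ); linarith)
  have hrad : (r : ℝ≥0∞) < q.radius := by
    refine lt_of_lt_of_le ?_ hball2.r_le
    exact_mod_cast (by rw [← NNReal.coe_lt_coe]; show t < (t+1)/2; linarith : r < r2)
  have hsum : Summable (fun n : ℕ => ‖a n‖ * t^n) := by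
    have := q.summable_norm_mul_pow hrad
    simp [hadef, FormalMultilinearSeries.norm_apply_eq_norm_coef] at this ⊢; exact this
  have key : HasDerivAt (fun w => ∑' n : ℕ, a n / (n+1) * w^(n+1))
      (∑' n : ℕ, a n * z^n) z := by
    refine hasDerivAt_tsum_of_isPreconnected hsum isOpen_ball
      (convex_ball (0:ℂ) t).isPreconnected
      (g := fun n w => a n / (n+1) * w^(n+1)) (g' := fun n w => a n * w^n)
      (fun n w hw => ?_) (fun n w hw => ?_) (mem_ball_self ht0) ?_
      (mem_ball_zero_iff.mpr ht1)
    · have h := (hasDerivAt_pow (n+1) w).const_mul (a n / (n+1))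
      refine h.congr_deriv ?_
      have hne : ((n:ℂ) + 1) ≠ 0 := Nat.cast_add_one_ne_zero n
      push_cast
      field_simp
    · rw [mem_ball_zero_iff] at hw
      rw [norm_mul, norm_pow]
      exact mul_le_mul_of_nonneg_left (pow_le_pow_left₀ (norm_nonneg w) hw.le n)
        (norm_nonneg _)
    · have h0 : (fun n : ℕ => a n / (n+1) * (0:ℂ)^(n+1)) = fun _ => 0 := by
        funext n; simp
      rw [h0]; exact summable_zero
  have hgz : (∑' n : ℕ, a n * z^n) = g z := by
    have hmem : z ∈ Metric.eball (0:ℂ) r := by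
      rw [Metric.mem_eball, edist_zero_right]
      exact_mod_cast (by rw [← NNReal.coe_lt_coe]; exact ht1 : ‖z‖₊ < r)
    have hs := hballr.hasSum hmem
    simp only [zero_add, FormalMultilinearSeries.apply_eq_pow_smul_coeff, smul_eq_mul] at hs
    rw [← hs.tsum_eq]
    congr 1; funext n; rw [mul_comm]
  rwa [hgz] at key

end ConfAux2
noncomputable section
namespace ConfAux3

lemma clm_ext_basis {E : Type*} [NormedAddCommGroup E] [NormedSpace ℝ E]
    (L₁ L₂ : ℂ →L[ℝ] E) (h1 : L₁ 1 = L₂ 1) (hI : L₁ I = L₂ I) : L₁ = L₂ := by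
  ext z
  have hz : z = (z.re : ℝ) • (1 : ℂ) + (z.im : ℝ) • I := by
    simp [Complex.real_smul, Complex.re_add_im]
  rw [hz, map_add, map_add, map_smul, map_smul, map_smul, map_smul, h1, hI]

variable {u : ℂ → ℝ}

def gDer (u : ℂ → ℝ) (z : ℂ) : ℂ :=
  ((fderiv ℝ u z 1 : ℝ) : ℂ) - Complex.I * ((fderiv ℝ u z Complex.I : ℝ) : ℂ)

lemma gDer_differentiableAt (hreg : ContDiffOn ℝ 2 u (ball (0:ℂ) 1))
    (hlap : ∀ z ∈ Metric.ball (0:ℂ) 1,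
      fderiv ℝ (fun w => fderiv ℝ u w 1) z 1 +
      fderiv ℝ (fun w => fderiv ℝ u w Complex.I) z Complex.I = 0)
    {z : ℂ} (hz : z ∈ ball (0:ℂ) 1) :
    DifferentiableAt ℂ (gDer u) z := by
  have hopen : ball (0:ℂ) 1 ∈ nhds z := isOpen_ball.mem_nhds hz
  have hD' : ContDiffOn ℝ 1 (fun w => fderiv ℝ u w) (ball (0:ℂ) 1) :=
    hreg.fderiv_of_isOpen isOpen_ball (by norm_num)
  have hD'd : DifferentiableAt ℝ (fun w => fderiv ℝ u w) z :=
    ((hD'.differentiableOn one_ne_zero) z hz).differentiableAt hopen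
  set H := fderiv ℝ (fun w => fderiv ℝ u w) z with hH
  have hux : HasFDerivAt (fun w => fderiv ℝ u w 1)
      ((ContinuousLinearMap.apply ℝ ℝ (1:ℂ)).comp H) z :=
    (ContinuousLinearMap.apply ℝ ℝ (1:ℂ)).hasFDerivAt.comp z hD'd.hasFDerivAt
  have huy : HasFDerivAt (fun w => fderiv ℝ u w Complex.I)
      ((ContinuousLinearMap.apply ℝ ℝ Complex.I).comp H) z :=
    (ContinuousLinearMap.apply ℝ ℝ Complex.I).hasFDerivAt.comp z hD'd.hasFDerivAt
  have hsymm : IsSymmSndFDerivAt ℝ u z :=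
    (hreg.contDiffAt hopen).isSymmSndFDerivAt (by norm_num)
  have hl := hlap z hz
  rw [hux.fderiv, huy.fderiv] at hl
  simp only [ContinuousLinearMap.coe_comp', Function.comp_apply,
    ContinuousLinearMap.apply_apply] at hl
  -- hl : H 1 1 + H I I = 0
  set M : ℂ →L[ℝ] ℂ :=
    (Complex.ofRealCLM.comp ((ContinuousLinearMap.apply ℝ ℝ (1:ℂ)).comp H)) -
      Complex.I • (Complex.ofRealCLM.comp ((ContinuousLinearMap.apply ℝ ℝ Complex.I).comp H))
    with hM
  have hgd : HasFDerivAt (gDer u) M z := by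
    have h1 := Complex.ofRealCLM.hasFDerivAt.comp z hux
    have h2 := Complex.ofRealCLM.hasFDerivAt.comp z huy
    have h3 := h1.sub (h2.const_smul Complex.I)
    exact h3.congr_of_eventuallyEq (Filter.Eventually.of_forall fun w => by simp [gDer])
  set c : ℂ := ((H 1 1 : ℝ) : ℂ) - Complex.I * ((H 1 Complex.I : ℝ) : ℂ) with hc
  set L : ℂ →L[ℂ] ℂ := c • (ContinuousLinearMap.id ℂ ℂ) with hL
  have hres : L.restrictScalars ℝ = M := by
    apply clm_ext_basis
    · simp only [hL, hM, ContinuousLinearMap.coe_restrictScalars',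
        ContinuousLinearMap.smul_apply, ContinuousLinearMap.id_apply,
        ContinuousLinearMap.sub_apply, ContinuousLinearMap.coe_comp', Function.comp_apply,
        ContinuousLinearMap.apply_apply, Complex.ofRealCLM_apply, smul_eq_mul, hc]
      ring
    · have hsy : H Complex.I 1 = H 1 Complex.I := hsymm Complex.I 1
      have hll : H Complex.I Complex.I = -(H 1 1) := by linarith
      simp only [hL, hM, ContinuousLinearMap.coe_restrictScalars',
        ContinuousLinearMap.smul_apply, ContinuousLinearMap.id_apply,
        ContinuousLinearMap.sub_apply, ContinuousLinearMap.coe_comp', Function.comp_apply,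
        ContinuousLinearMap.apply_apply, Complex.ofRealCLM_apply, smul_eq_mul, hc,
        hsy, hll]
      push_cast
      linear_combination (-(((H 1 Complex.I : ℝ)) : ℂ)) * Complex.I_sq
  exact (hasFDerivAt_of_restrictScalars ℝ hgd hres).differentiableAt

end ConfAux3

/-- If equality holds in the gradient estimate at some point, then the function is the
real part of a conformal isomorphism from the unit disc onto the right
half-plane. -/
theorem conformal_of_gradient_eq (u : ℂ → ℝ)
(hreg : ContDiffOn ℝ 2 u (Metric.ball (0:ℂ) 1))
    (hlap : ∀ z ∈ Metric.ball (0:ℂ) 1,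
      fderiv ℝ (fun w => fderiv ℝ u w 1) z 1 +
      fderiv ℝ (fun w => fderiv ℝ u w Complex.I) z Complex.I = 0)
    (hpos : ∀ z ∈ Metric.ball (0:ℂ) 1, 0 < u z)
    (z₀ : ℂ) (hz₀ : z₀ ∈ Metric.ball (0:ℂ) 1)
    (heq : ‖gradient u z₀‖ = 2 * u z₀ / (1 - ‖z₀‖ ^ 2)) :
    ∃ f : ℂ → ℂ, DifferentiableOn ℂ f (Metric.ball (0:ℂ) 1) ∧
      Set.BijOn f (Metric.ball (0:ℂ) 1) {w : ℂ | 0 < w.re} ∧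
      ∀ z ∈ Metric.ball (0:ℂ) 1, (f z).re = u z := by
  classical
  have h0mem : (0:ℂ) ∈ ball (0:ℂ) 1 := mem_ball_self one_pos
  -- Step 1 : complex differentiability of gDer
  have hgd : DifferentiableOn ℂ (ConfAux3.gDer u) (ball (0:ℂ) 1) := fun z hz =>
    (ConfAux3.gDer_differentiableAt hreg hlap hz).differentiableWithinAt
  -- Step 2 : primitive
  obtain ⟨F₀, hF₀0, hF₀d⟩ := ConfAux2.exists_primitive hgd
  set F : ℂ → ℂ := fun z => F₀ z + (u 0 : ℂ) with hFdef
  have hFd : ∀ z ∈ ball (0:ℂ) 1, HasDerivAt F (ConfAux3.gDer u z) z := fun z hz =>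
    (hF₀d z hz).add_const _
  have hFdiff : DifferentiableOn ℂ F (ball (0:ℂ) 1) := fun z hz =>
    (hFd z hz).differentiableAt.differentiableWithinAt
  -- Step 3 : Re F = u
  have hud : DifferentiableOn ℝ u (ball (0:ℂ) 1) := hreg.differentiableOn (by norm_num)
  have hre : ∀ z ∈ ball (0:ℂ) 1, (F z).re = u z := by
    have hdiff : DifferentiableOn ℝ (fun z => u z - (F z).re) (ball (0:ℂ) 1) := by
      refine hud.sub ?_
      exact fun z hz => (Complex.reCLM.differentiableAt.comp z
        ((hFd z hz).differentiableAt.restrictScalars ℝ)).differentiableWithinAt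
    have hzero : ∀ z ∈ ball (0:ℂ) 1,
        fderivWithin ℝ (fun z => u z - (F z).re) (ball (0:ℂ) 1) z = 0 := by
      intro z hz
      have hopen : ball (0:ℂ) 1 ∈ nhds z := isOpen_ball.mem_nhds hz
      have huz : HasFDerivAt u (fderiv ℝ u z) z :=
        ((hud z hz).differentiableAt hopen).hasFDerivAt
      have hFz : HasFDerivAt F
          ((ContinuousLinearMap.smulRight (1 : ℂ →L[ℂ] ℂ) (ConfAux3.gDer u z)).restrictScalars ℝ)
          z := ((hFd z hz).hasFDerivAt).restrictScalars ℝ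
      have hFre : HasFDerivAt (fun w => (F w).re)
          (Complex.reCLM.comp
            ((ContinuousLinearMap.smulRight (1 : ℂ →L[ℂ] ℂ) (ConfAux3.gDer u z)).restrictScalars ℝ))
          z := Complex.reCLM.hasFDerivAt.comp z hFz
      have hsub := huz.sub hFre
      have hzero' : fderiv ℝ u z -
          Complex.reCLM.comp
            ((ContinuousLinearMap.smulRight (1 : ℂ →L[ℂ] ℂ) (ConfAux3.gDer u z)).restrictScalars ℝ)
          = 0 := by
        apply ConfAux.clm_ext_basis
        · simp [ConfAux3.gDer]
        · simp [ConfAux3.gDer]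
      rw [hzero'] at hsub
      exact (hsub.hasFDerivWithinAt).fderivWithin (isOpen_ball.uniqueDiffWithinAt hz)
    intro z hz
    have := (convex_ball (0:ℂ) 1).is_const_of_fderivWithin_eq_zero hdiff hzero hz h0mem
    have hF0 : (F 0).re = u 0 := by
      simp [hFdef, hF₀0]
    have : u z - (F z).re = u 0 - (F 0).re := this
    rw [hF0] at this
    linarith
  -- Step 4 : gradient value
  have hz₀n : ‖z₀‖ < 1 := by rwa [mem_ball, dist_zero_right] at hz₀
  set a : ℂ := (fderiv ℝ u z₀ 1 : ℝ) + (fderiv ℝ u z₀ Complex.I : ℝ) * Complex.I with hadef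
  have hdu : HasFDerivAt u (fderiv ℝ u z₀) z₀ :=
    ((hud z₀ hz₀).differentiableAt (isOpen_ball.mem_nhds hz₀)).hasFDerivAt
  have hdual : (InnerProductSpace.toDual ℝ ℂ) a = fderiv ℝ u z₀ := by
    apply ConfAux.clm_ext_basis
    · rw [InnerProductSpace.toDual_apply_apply, Complex.inner]
      simp [hadef]
    · rw [InnerProductSpace.toDual_apply_apply, Complex.inner]
      simp [hadef]
  have hga : HasGradientAt u a z₀ := by
    rw [hasGradientAt_iff_hasFDerivAt, hdual]; exact hdu
  have hgradval : gradient u z₀ = a := hga.gradient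
  have hnorm_g : ‖ConfAux3.gDer u z₀‖ = ‖a‖ := by
    have hconj : ConfAux3.gDer u z₀ = (starRingEnd ℂ) a := by
      apply Complex.ext <;> simp [ConfAux3.gDer, hadef]
    rw [hconj, RCLike.norm_conj]
  have hub : 0 < u z₀ := hpos z₀ hz₀
  have hs1 : Complex.normSq z₀ < 1 := ConfAux.normSq_lt_one hz₀n
  have heq' : ‖ConfAux3.gDer u z₀‖ = 2 * u z₀ / (1 - Complex.normSq z₀) := by
    rw [hnorm_g, ← hgradval, heq, Complex.sq_norm]
  -- Step 5 : Möbius setup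
  set w₀ : ℂ := F z₀ with hw₀def
  have hw₀re : w₀.re = u z₀ := hre z₀ hz₀
  have hw₀pos : 0 < w₀.re := by rw [hw₀re]; exact hub
  have hFpos : ∀ {z : ℂ}, z ∈ ball (0:ℂ) 1 → 0 < (F z).re := fun {z} hz => by
    rw [hre _ hz]; exact hpos _ hz
  have hφmem : ∀ {z : ℂ}, z ∈ ball (0:ℂ) 1 → ConfAux.phi z₀ z ∈ ball (0:ℂ) 1 := by
    intro z hz
    rw [mem_ball, dist_zero_right] at hz ⊢
    exact ConfAux.phi_mapsTo hz₀n hz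
  set C₁ : ℂ := 1 / (w₀ + (starRingEnd ℂ) w₀) with hC₁def
  set G : ℂ → ℂ := fun z => ConfAux.psi w₀ (F (ConfAux.phi z₀ z)) with hGdef
  have hKopen : IsOpen {w : ℂ | 0 < w.re} := isOpen_lt continuous_const Complex.continuous_re
  have hGdiff : DifferentiableOn ℂ G (ball (0:ℂ) 1) := by
    intro z hz
    have h1 : DifferentiableAt ℂ (ConfAux.phi z₀) z :=
      ((ConfAux.differentiableOn_phi hz₀n) z hz).differentiableAt (isOpen_ball.mem_nhds hz)
    have hφz := hφmem hz
    have h2 : DifferentiableAt ℂ F (ConfAux.phi z₀ z) := (hFd _ hφz).differentiableAt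
    have hFK : F (ConfAux.phi z₀ z) ∈ {w : ℂ | 0 < w.re} := hFpos hφz
    have h3 : DifferentiableAt ℂ (ConfAux.psi w₀) (F (ConfAux.phi z₀ z)) :=
      ((ConfAux.differentiableOn_psi hw₀pos) _ hFK).differentiableAt (hKopen.mem_nhds hFK)
    exact ((h3.comp _ h2).comp z h1).differentiableWithinAt
  have hG0 : G 0 = 0 := by
    simp only [hGdef]
    rw [ConfAux.phi_zero, ← hw₀def, ConfAux.psi_w₀]
  have hGmaps : MapsTo G (ball (0:ℂ) 1) (ball (G 0) 1) := by
    intro z hz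
    rw [hG0, mem_ball, dist_zero_right]
    exact ConfAux.psi_mapsTo hw₀pos (hFpos (hφmem hz))
  have hDG : HasDerivAt G (C₁ * (ConfAux3.gDer u z₀ * (1 - (Complex.normSq z₀ : ℂ)))) 0 := by
    have h1 : HasDerivAt (F ∘ ConfAux.phi z₀)
        (ConfAux3.gDer u z₀ * (1 - (Complex.normSq z₀ : ℂ))) 0 := by
      have hF' : HasDerivAt F (ConfAux3.gDer u z₀) (ConfAux.phi z₀ 0) := by
        rw [ConfAux.phi_zero]; exact hFd z₀ hz₀
      exact hF'.comp 0 (ConfAux.hasDerivAt_phi hz₀n)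
    have hc0 : (F ∘ ConfAux.phi z₀) 0 = w₀ := by
      simp only [Function.comp_apply, ConfAux.phi_zero, hw₀def]
    have h2 : HasDerivAt (ConfAux.psi w₀) C₁ ((F ∘ ConfAux.phi z₀) 0) := by
      rw [hc0, hC₁def]; exact ConfAux.hasDerivAt_psi hw₀pos
    have h3 := h2.comp 0 h1
    simpa [Function.comp_def, hGdef] using h3
  have hnorm1 : ‖C₁ * (ConfAux3.gDer u z₀ * (1 - (Complex.normSq z₀ : ℂ)))‖ = 1 := by
    rw [norm_mul, norm_mul]
    have e1 : ‖C₁‖ = 1 / (2 * u z₀) := by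
      rw [hC₁def, norm_div, norm_one, ConfAux.sum_conj_re, hw₀re, Complex.norm_real,
        Real.norm_eq_abs, abs_of_pos (by linarith)]
    have e3 : ‖(1 - (Complex.normSq z₀ : ℂ))‖ = 1 - Complex.normSq z₀ := by
      rw [show (1 - (Complex.normSq z₀ : ℂ)) = ((1 - Complex.normSq z₀ : ℝ) : ℂ) by
        push_cast; ring]
      rw [Complex.norm_real, Real.norm_eq_abs, abs_of_pos (by linarith)]
    rw [e1, heq', e3]
    field_simp
    exact div_self (by linarith)
  -- Step 6 : Schwarz lemma equality case
  have hdsl : ‖dslope G 0 0‖ = 1 / 1 := by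
    rw [dslope_same, hDG.deriv, hnorm1]; norm_num
  have hEq := Complex.affine_of_mapsTo_ball_of_norm_dslope_eq_div hGdiff (hGmaps.mono_right ball_subset_closedBall) h0mem hdsl
  set C : ℂ := dslope G 0 0 with hCdef
  have hCnorm : ‖C‖ = 1 := by rw [hCdef, dslope_same, hDG.deriv]; exact hnorm1
  have hCne : C ≠ 0 := by intro h; rw [h, norm_zero] at hCnorm; norm_num at hCnorm
  have hGC : ∀ z ∈ ball (0:ℂ) 1, G z = C * z := by
    intro z hz
    have h := hEq hz
    simp only [hG0, sub_zero, smul_eq_mul, zero_add] at h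
    rw [h, mul_comm]
  -- Step 7 : conclusion
  refine ⟨F, hFdiff, ⟨?_, ?_, ?_⟩, fun z hz => hre z hz⟩
  · intro z hz
    exact hFpos hz
  · intro p hp q hq hFeq
    have hpn : ‖p‖ < 1 := by rwa [mem_ball, dist_zero_right] at hp
    have hqn : ‖q‖ < 1 := by rwa [mem_ball, dist_zero_right] at hq
    have hvp : ‖ConfAux.phiInv z₀ p‖ < 1 := ConfAux.phiInv_mapsTo hz₀n hpn
    have hvq : ‖ConfAux.phiInv z₀ q‖ < 1 := ConfAux.phiInv_mapsTo hz₀n hqn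
    have hGp : G (ConfAux.phiInv z₀ p) = ConfAux.psi w₀ (F p) := by
      simp only [hGdef]
      rw [ConfAux.phi_phiInv hz₀n hpn]
    have hGq : G (ConfAux.phiInv z₀ q) = ConfAux.psi w₀ (F q) := by
      simp only [hGdef]
      rw [ConfAux.phi_phiInv hz₀n hqn]
    have h1 : C * ConfAux.phiInv z₀ p = C * ConfAux.phiInv z₀ q := by
      rw [← hGC _ (mem_ball_zero_iff.mpr hvp), ← hGC _ (mem_ball_zero_iff.mpr hvq),
        hGp, hGq, hFeq]
    have h2 : ConfAux.phiInv z₀ p = ConfAux.phiInv z₀ q := mul_left_cancel₀ hCne h1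
    calc p = ConfAux.phi z₀ (ConfAux.phiInv z₀ p) := (ConfAux.phi_phiInv hz₀n hpn).symm
      _ = ConfAux.phi z₀ (ConfAux.phiInv z₀ q) := by rw [h2]
      _ = q := ConfAux.phi_phiInv hz₀n hqn
  · intro v hv
    have hvre : 0 < v.re := hv
    have hζ : ‖ConfAux.psi w₀ v‖ < 1 := ConfAux.psi_mapsTo hw₀pos hvre
    set z : ℂ := (starRingEnd ℂ) C * ConfAux.psi w₀ v with hzdef
    have hzn : ‖z‖ < 1 := by
      rw [hzdef, norm_mul, RCLike.norm_conj, hCnorm, one_mul]; exact hζ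
    have hwmem : ConfAux.phi z₀ z ∈ ball (0:ℂ) 1 := hφmem (mem_ball_zero_iff.mpr hzn)
    have hGz : G z = ConfAux.psi w₀ v := by
      rw [hGC z (mem_ball_zero_iff.mpr hzn), hzdef, ← mul_assoc, Complex.mul_conj]
      have : Complex.normSq C = 1 := by
        have := ConfAux.normSq_eq_sq_norm C
        rw [hCnorm] at this; simpa using this
      rw [this, Complex.ofReal_one, one_mul]
    have hGz' : G z = ConfAux.psi w₀ (F (ConfAux.phi z₀ z)) := rfl
    have hψeq : ConfAux.psi w₀ (F (ConfAux.phi z₀ z)) = ConfAux.psi w₀ v := by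
      rw [← hGz', hGz]
    have hFw : F (ConfAux.phi z₀ z) = v := by
      have h1 := ConfAux.psiInv_psi hw₀pos (hFpos hwmem)
      have h2 := ConfAux.psiInv_psi hw₀pos hvre
      rw [← h1, hψeq, h2]
    exact ⟨ConfAux.phi z₀ z, hwmem, hFw⟩
end
end
end ConfAux
end
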